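/- arXiv:1803.06882 — 4 statements merged into one kernel-verified Lean document; each statement's English description precedes it below -/
import Mathlib

section
/- Let H be a separable real or complex Hilbert space and T a self-adjoint, positive, trace-class operator on H with tr(T) = 1. Then the map μ : L(H) → ℝ defined by μ(P) = tr(PT) takes values in [0,1], satisfies μ(I) = 1, and is σ-additive: for every finite or countable family {P_k}_{k∈K} of pairwise orthogonal projections, ∑_{k∈K} tr(P_k T) = tr((⋁_{k∈K} P_k) T), where ⋁_k P_k is the orthogonal projection onto the closure of the span of the union of the ranges of the P_k (equivalently, the strong limit of the partial sums ∑_{k≤n} P_k). -/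
noncomputable section
open RCLike ContinuousLinearMap

universe u v w

variable {𝕜 : Type*} [RCLike 𝕜] {E : Type u} [NormedAddCommGroup E] [InnerProductSpace 𝕜 E]
  [CompleteSpace E]

open Classical in
/-- The absolute value `|A| = √(A* A)` of a bounded operator: the unique positive
selfadjoint square root of `A* A`. -/
noncomputable def clmAbs (A : E →L[𝕜] E) : E →L[𝕜] E :=
  if h : ∃ S : E →L[𝕜] E, S.IsPositive ∧ S * S = star A * A then h.choose else 0

/-- `A` is trace class if `∑_{u∈N} ⟨u, |A| u⟩ < ∞` for some Hilbert basis `N`. -/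
def IsTraceClass (A : E →L[𝕜] E) : Prop :=
  ∃ (ι : Type u) (N : HilbertBasis ι 𝕜 E),
    Summable fun i => re (inner 𝕜 (N i) (clmAbs A (N i)) : 𝕜)

/-- The trace of `A` computed along the Hilbert basis `N`. -/
noncomputable def traceAlong {ι : Type v} (N : HilbertBasis ι 𝕜 E) (A : E →L[𝕜] E) : 𝕜 :=
  ∑' i, (inner 𝕜 (N i) (A (N i)) : 𝕜)

variable (𝕜 E) in
/-- A choice of Hilbert basis of `E`. -/
noncomputable def stdHilbertBasis : HilbertBasis (exists_hilbertBasis 𝕜 E).choose 𝕜 E :=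
  (exists_hilbertBasis 𝕜 E).choose_spec.choose

/-- The trace `tr A = ∑_{u∈N} ⟨u, A u⟫` (basis independent for trace-class operators). -/
noncomputable def clmTrace (A : E →L[𝕜] E) : 𝕜 :=
  traceAlong (stdHilbertBasis 𝕜 E) A

/-- The trace norm `‖A‖₁ = ∑_{u ∈ N} ⟨u, |A| u⟩` (basis independent). -/
noncomputable def traceNorm (A : E →L[𝕜] E) : ℝ :=
  ∑' i, re (inner 𝕜 (stdHilbertBasis 𝕜 E i) (clmAbs A (stdHilbertBasis 𝕜 E i)) : 𝕜)

/-- An orthogonal projection: `P ∘ P = P` and `P* = P`. -/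
def IsOrthoProj (P : E →L[𝕜] E) : Prop :=
  IsSelfAdjoint P ∧ P * P = P

theorem aux_symm {T : E →L[𝕜] E} (hT : IsSelfAdjoint T) (x y : E) :
    (inner 𝕜 (T x) y : 𝕜) = inner 𝕜 x (T y) := by
  have := (isSelfAdjoint_iff_isSymmetric.mp hT) x y
  simpa using this

theorem aux_cs {T : E →L[𝕜] E} (hT : T.IsPositive) (x y : E) :
    (re (inner 𝕜 (T x) y : 𝕜))^2 ≤ re (inner 𝕜 (T x) x : 𝕜) * re (inner 𝕜 (T y) y : 𝕜) := by
  have key : ∀ t : ℝ, 0 ≤ re (inner 𝕜 (T y) y : 𝕜) * (t * t) + (2 * re (inner 𝕜 (T x) y : 𝕜)) * t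
      + re (inner 𝕜 (T x) x : 𝕜) := by
    intro t
    have h0 := hT.2 (x + (t:𝕜) • y)
    rw [ContinuousLinearMap.reApplyInnerSelf_apply] at h0
    have hexp : (inner 𝕜 (T (x + (t:𝕜) • y)) (x + (t:𝕜) • y) : 𝕜)
        = inner 𝕜 (T x) x + (t:𝕜) * inner 𝕜 (T x) y + (starRingEnd 𝕜) (t:𝕜) * inner 𝕜 (T y) x
          + (starRingEnd 𝕜) (t:𝕜) * ((t:𝕜) * inner 𝕜 (T y) y) := by
      simp only [map_add, map_smul, inner_add_left, inner_add_right, inner_smul_left,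
        inner_smul_right, smul_eq_mul]
      ring
    rw [hexp] at h0
    have hyx : re (inner 𝕜 (T y) x : 𝕜) = re (inner 𝕜 (T x) y : 𝕜) := by
      rw [aux_symm hT.isSelfAdjoint y x]
      exact inner_re_symm _ _
    simp only [map_add, conj_ofReal, RCLike.mul_re, ofReal_re, ofReal_im, zero_mul,
      mul_zero, sub_zero] at h0
    rw [hyx] at h0
    nlinarith [h0]
  have := discrim_le_zero key
  rw [discrim] at this
  nlinarith [this]

theorem aux_norm_sq_le {T : E →L[𝕜] E} (hT : T.IsPositive) (hn : ‖T‖ ≤ 1) (x : E) :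
    ‖T x‖^2 ≤ re (inner 𝕜 (T x) x : 𝕜) := by
  rcases eq_or_ne (T x) 0 with h | h
  · simp [h]
  · have h1 := aux_cs hT x (T x)
    have h2 : re (inner 𝕜 (T (T x)) (T x) : 𝕜) ≤ ‖T x‖^2 := by
      calc re (inner 𝕜 (T (T x)) (T x) : 𝕜) ≤ ‖(inner 𝕜 (T (T x)) (T x) : 𝕜)‖ := re_le_norm _
        _ ≤ ‖T (T x)‖ * ‖T x‖ := norm_inner_le_norm _ _
        _ ≤ (‖T‖ * ‖T x‖) * ‖T x‖ := by gcongr; exact T.le_opNorm _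
        _ ≤ ‖T x‖^2 := by nlinarith [norm_nonneg (T x)]
    have h3 : re (inner 𝕜 (T x) (T x) : 𝕜) = ‖T x‖^2 := by
      rw [inner_self_eq_norm_sq]
    rw [h3] at h1
    have h4 : 0 < ‖T x‖ := norm_pos_iff.mpr h
    have h5 : 0 ≤ re (inner 𝕜 (T x) x : 𝕜) := hT.re_inner_nonneg_left x
    nlinarith [h1, h2, h4, h5]

theorem aux_exists_sqrt_of_norm_le {T : E →L[𝕜] E} (hpos : T.IsPositive) (hn : ‖T‖ ≤ 1) :
    ∃ S : E →L[𝕜] E, S.IsPositive ∧ S * S = T := by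
  classical
  set A : E →L[𝕜] E := 1 - T with hA
  have hA_sa : IsSelfAdjoint A := (IsSelfAdjoint.one _).sub hpos.isSelfAdjoint
  have hA_norm : ‖A‖ ≤ 1 := by
    refine ContinuousLinearMap.opNorm_le_bound _ zero_le_one fun x => ?_
    have hsq : ‖A x‖^2 ≤ ‖x‖^2 := by
      have h1 : ‖A x‖^2 = ‖x‖^2 - 2 * re (inner 𝕜 x (T x) : 𝕜) + ‖T x‖^2 := by
        have hax : A x = x - T x := by simp [hA]
        rw [hax, @norm_sub_sq 𝕜]
      have h2 : re (inner 𝕜 (T x) x : 𝕜) = re (inner 𝕜 x (T x) : 𝕜) := inner_re_symm _ _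
      have h3 := aux_norm_sq_le hpos hn x
      have h5 : 0 ≤ re (inner 𝕜 (T x) x : 𝕜) := hpos.re_inner_nonneg_left x
      rw [h2] at h3 h5
      linarith
    nlinarith [norm_nonneg (A x), norm_nonneg x, hsq]
  -- the iteration
  let β : ℕ → ℝ := fun n => Nat.rec 0 (fun _ b => (1 + b^2)/2) n
  let B : ℕ → (E →L[𝕜] E) := fun n => Nat.rec 0 (fun _ X => (2:𝕜)⁻¹ • (A + X * X)) n
  have hβ0 : β 0 = 0 := rfl
  have hβs : ∀ n, β (n+1) = (1 + (β n)^2)/2 := fun n => rfl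
  have hB0 : B 0 = 0 := rfl
  have hBs : ∀ n, B (n+1) = (2:𝕜)⁻¹ • (A + B n * B n) := fun n => rfl
  have hsmul_norm : ∀ X : E →L[𝕜] E, ‖(2:𝕜)⁻¹ • X‖ ≤ (2:ℝ)⁻¹ * ‖X‖ := by
    intro X
    have := ContinuousLinearMap.opNorm_smul_le ((2:𝕜)⁻¹) X
    simpa using this
  have hβ_bounds : ∀ n, 0 ≤ β n ∧ β n ≤ 1 := by
    intro n
    induction n with
    | zero => simp [hβ0]
    | succ n ih => rw [hβs]; constructor <;> nlinarith [ih.1, ih.2]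
  have hβ_mono : ∀ n, β n ≤ β (n+1) := by
    intro n
    rw [hβs]
    nlinarith [sq_nonneg (β n - 1)]
  have hB_sa : ∀ n, IsSelfAdjoint (B n) := by
    intro n
    induction n with
    | zero => rw [hB0]; exact .zero _
    | succ n ih =>
      rw [hBs]
      have h2 : IsSelfAdjoint (B n * B n) := by rw [← sq]; exact ih.pow 2
      have hr : IsSelfAdjoint ((2:𝕜)⁻¹) := by
        rw [isSelfAdjoint_iff]
        simp [star_inv₀]
      exact hr.smul (hA_sa.add h2)
  have hB_norm : ∀ n, ‖B n‖ ≤ β n := by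
    intro n
    induction n with
    | zero => simp [hB0, hβ0]
    | succ n ih =>
      rw [hBs, hβs]
      refine le_trans (hsmul_norm _) ?_
      have h1 : ‖A + B n * B n‖ ≤ ‖A‖ + ‖B n‖ * ‖B n‖ :=
        le_trans (norm_add_le _ _) (by gcongr; exact norm_mul_le _ _)
      nlinarith [ih, hA_norm, norm_nonneg (B n)]
  have hB_diff : ∀ n, ‖B (n+1) - B n‖ ≤ β (n+1) - β n := by
    intro n
    induction n with
    | zero =>
      rw [hBs, hB0, hβs, hβ0]
      simp only [mul_zero, zero_mul, add_zero, sub_zero, mul_one]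
      refine le_trans (hsmul_norm _) ?_
      norm_num
      nlinarith [hA_norm]
    | succ n ih =>
      have heq : B (n+1+1) - B (n+1)
          = (2:𝕜)⁻¹ • (B (n+1) * (B (n+1) - B n) + (B (n+1) - B n) * B n) := by
        rw [hBs (n+1), hBs n, ← smul_sub]
        congr 1
        noncomm_ring
      rw [heq]
      refine le_trans (hsmul_norm _) ?_
      have hd : (0:ℝ) ≤ β (n+1) - β n := by linarith [hβ_mono n]
      have h1 : ‖B (n+1) * (B (n+1) - B n) + (B (n+1) - B n) * B n‖
          ≤ β (n+1) * (β (n+1) - β n) + (β (n+1) - β n) * β n := by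
        refine le_trans (norm_add_le _ _) ?_
        gcongr
        · exact le_trans (norm_mul_le _ _)
            (mul_le_mul (hB_norm (n+1)) ih (norm_nonneg _) (hβ_bounds (n+1)).1)
        · exact le_trans (norm_mul_le _ _)
            (mul_le_mul ih (hB_norm n) (norm_nonneg _) hd)
      have h3 : β (n+1+1) - β (n+1) = ((β (n+1))^2 - (β n)^2)/2 := by
        rw [hβs (n+1), hβs n]; ring
      rw [h3]
      nlinarith [h1]
  -- Cauchy sequence
  have hsummable : Summable (fun n => β (n+1) - β n) := by
    refine summable_of_sum_range_le (c := 1) (fun n => by linarith [hβ_mono n]) fun n => ?_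
    rw [Finset.sum_range_sub (f := β)]
    linarith [(hβ_bounds n).1, (hβ_bounds n).2, (hβ_bounds 0).1]
  have hcauchy : CauchySeq B := by
    refine cauchySeq_of_summable_dist ?_
    refine Summable.of_nonneg_of_le (fun n => dist_nonneg) (fun n => ?_) hsummable
    rw [dist_eq_norm, ← norm_neg]
    simpa [neg_sub] using hB_diff n
  obtain ⟨L, hL⟩ := cauchySeq_tendsto_of_complete hcauchy
  have hL_eq : L = (2:𝕜)⁻¹ • (A + L * L) := by
    have h1 : Filter.Tendsto (fun n => B (n+1)) Filter.atTop (nhds L) :=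
      hL.comp (Filter.tendsto_add_atTop_nat 1)
    have h2 : Filter.Tendsto (fun n => (2:𝕜)⁻¹ • (A + B n * B n)) Filter.atTop
        (nhds ((2:𝕜)⁻¹ • (A + L * L))) := by
      exact (((hL.mul hL).const_add A).const_smul _)
    rw [show (fun n => B (n+1)) = (fun n => (2:𝕜)⁻¹ • (A + B n * B n)) from funext hBs] at h1
    exact tendsto_nhds_unique h1 h2
  have hL_sa : IsSelfAdjoint L := by
    have h1 : Filter.Tendsto (fun n => star (B n)) Filter.atTop (nhds (star L)) :=
      hL.star
    have h2 : (fun n => star (B n)) = B := funext fun n => (hB_sa n).star_eq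
    rw [h2] at h1
    exact isSelfAdjoint_iff.mpr (tendsto_nhds_unique h1 hL)
  have hL_norm : ‖L‖ ≤ 1 := by
    refine le_of_tendsto hL.norm (Filter.Eventually.of_forall fun n => ?_)
    exact le_trans (hB_norm n) (hβ_bounds n).2
  refine ⟨1 - L, ⟨isSelfAdjoint_iff_isSymmetric.mp ((IsSelfAdjoint.one _).sub hL_sa), fun x => ?_⟩, ?_⟩
  · rw [ContinuousLinearMap.reApplyInnerSelf_apply]
    have h1 : ((1 - L : E →L[𝕜] E) x) = x - L x := by simp
    rw [h1, inner_sub_left]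
    have h2 : re (inner 𝕜 (L x) x : 𝕜) ≤ ‖x‖^2 := by
      calc re (inner 𝕜 (L x) x : 𝕜) ≤ ‖(inner 𝕜 (L x) x : 𝕜)‖ := re_le_norm _
        _ ≤ ‖L x‖ * ‖x‖ := norm_inner_le_norm _ _
        _ ≤ (‖L‖ * ‖x‖) * ‖x‖ := by gcongr; exact L.le_opNorm _
        _ ≤ ‖x‖^2 := by nlinarith [norm_nonneg x, norm_nonneg L]
    have h3 : re (inner 𝕜 x x : 𝕜) = ‖x‖^2 := by rw [inner_self_eq_norm_sq]
    simp only [map_sub]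
    rw [h3]
    linarith
  · have hL2 : (2:𝕜) • L = A + L * L := by
      nth_rewrite 1 [hL_eq]
      rw [smul_smul, mul_inv_cancel₀ (two_ne_zero), one_smul]
    have hexp : (1 - L) * (1 - L) = 1 - ((2:𝕜) • L) + L * L := by
      rw [two_smul]
      noncomm_ring
    rw [hexp, hL2, hA]
    noncomm_ring

theorem aux_exists_sqrt {T : E →L[𝕜] E} (hpos : T.IsPositive) :
    ∃ S : E →L[𝕜] E, S.IsPositive ∧ S * S = T := by
  rcases eq_or_ne T 0 with h | h
  · exact ⟨0, isPositive_zero, by simp [h]⟩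
  · have hT : (0:ℝ) < ‖T‖ := norm_pos_iff.mpr h
    set c : ℝ := ‖T‖ with hc
    have hsm : ∀ (r : ℝ) (X : E →L[𝕜] E), 0 ≤ r → X.IsPositive → ((r:𝕜) • X).IsPositive := by
      intro r X hr hX
      constructor
      · exact isSelfAdjoint_iff_isSymmetric.mp (IsSelfAdjoint.smul (show IsSelfAdjoint (r:𝕜) by rw [isSelfAdjoint_iff, RCLike.star_def, conj_ofReal]) hX.isSelfAdjoint)
      · intro x
        rw [ContinuousLinearMap.reApplyInnerSelf_apply]
        simp only [ContinuousLinearMap.smul_apply, inner_smul_left, conj_ofReal,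
          RCLike.mul_re, ofReal_re, ofReal_im, zero_mul, sub_zero]
        have := hX.2 x
        rw [ContinuousLinearMap.reApplyInnerSelf_apply] at this
        positivity
    have h1 : ((c⁻¹ : ℝ) : 𝕜) • T |>.IsPositive := hsm _ _ (by positivity) hpos
    have h2 : ‖((c⁻¹ : ℝ) : 𝕜) • T‖ ≤ 1 := by
      have := ContinuousLinearMap.opNorm_smul_le (((c⁻¹ : ℝ)) : 𝕜) T
      rw [norm_ofReal] at this
      refine le_trans this ?_
      rw [abs_of_nonneg (by positivity), ← hc, inv_mul_cancel₀ (ne_of_gt hT)]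
    obtain ⟨S₀, hS₀pos, hS₀sq⟩ := aux_exists_sqrt_of_norm_le h1 h2
    refine ⟨((Real.sqrt c : ℝ) : 𝕜) • S₀, hsm _ _ (Real.sqrt_nonneg c) hS₀pos, ?_⟩
    have : (((Real.sqrt c : ℝ) : 𝕜) • S₀) * (((Real.sqrt c : ℝ) : 𝕜) • S₀)
        = ((Real.sqrt c * Real.sqrt c : ℝ) : 𝕜) • (S₀ * S₀) := by
      rw [smul_mul_assoc, mul_smul_comm, smul_smul, ofReal_mul]
    rw [this, hS₀sq, Real.mul_self_sqrt (le_of_lt hT), smul_smul, ← ofReal_mul,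
      mul_inv_cancel₀ (ne_of_gt hT)]
    simp

theorem aux_parseval {ι : Type*} (e : HilbertBasis ι 𝕜 E) (x : E) :
    HasSum (fun i => ‖(inner 𝕜 (e i) x : 𝕜)‖^2) (‖x‖^2) := by
  have h := e.hasSum_inner_mul_inner x x
  have h2 : ∀ i, (inner 𝕜 x (e i) : 𝕜) * (inner 𝕜 (e i) x) = ((‖(inner 𝕜 (e i) x : 𝕜)‖^2 : ℝ) : 𝕜) := by
    intro i
    calc (inner 𝕜 x (e i) : 𝕜) * (inner 𝕜 (e i) x)
        = (starRingEnd 𝕜) (inner 𝕜 (e i) x : 𝕜) * (inner 𝕜 (e i) x : 𝕜) := by rw [inner_conj_symm]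
      _ = ((‖(inner 𝕜 (e i) x : 𝕜)‖^2 : ℝ) : 𝕜) := by rw [RCLike.conj_mul]; norm_cast
  rw [funext h2, inner_self_eq_norm_sq_to_K] at h
  have h3 := (reCLM : 𝕜 →L[ℝ] ℝ).hasSum h
  simpa only [reCLM_apply, ← RCLike.ofReal_pow, ofReal_re] using h3

theorem aux_summable_coeff {ι : Type*} (e : HilbertBasis ι 𝕜 E) {S : E →L[𝕜] E}
    (hS : Summable fun i => ‖S (e i)‖^2) :
    Summable (fun p : ι × ι => ‖(inner 𝕜 (e p.2) (S (e p.1)) : 𝕜)‖^2) := by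
  rw [summable_prod_of_nonneg (fun p => by positivity)]
  constructor
  · exact fun i => (aux_parseval e (S (e i))).summable
  · refine hS.congr fun i => ?_
    exact ((aux_parseval e (S (e i))).tsum_eq).symm

/-- trace swap for two Hilbert–Schmidt operators -/
theorem aux_tsum_comm {ι : Type*} (e : HilbertBasis ι 𝕜 E) (S C : E →L[𝕜] E)
    (hS : Summable fun i => ‖S (e i)‖^2) (hC : Summable fun i => ‖C (e i)‖^2) :
    ∑' i, (inner 𝕜 (e i) (C (S (e i))) : 𝕜) = ∑' i, (inner 𝕜 (e i) (S (C (e i))) : 𝕜) := by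
  set F : ι × ι → 𝕜 := fun p => (inner 𝕜 (e p.2) (S (e p.1)) : 𝕜) * (inner 𝕜 (e p.1) (C (e p.2)) : 𝕜)
    with hF
  have hrow : ∀ i, HasSum (fun j => F (i, j)) (inner 𝕜 (e i) (C (S (e i))) : 𝕜) := by
    intro i
    have h := (e.hasSum_repr (S (e i))).mapL ((innerSL 𝕜 (e i)).comp C)
    refine h.congr_fun fun j => ?_
    simp [hF, e.repr_apply_apply, smul_eq_mul, mul_comm]
  have hcol : ∀ j, HasSum (fun i => F (i, j)) (inner 𝕜 (e j) (S (C (e j))) : 𝕜) := by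
    intro j
    have h := (e.hasSum_repr (C (e j))).mapL ((innerSL 𝕜 (e j)).comp S)
    refine h.congr_fun fun i => ?_
    simp [hF, e.repr_apply_apply, smul_eq_mul, mul_comm]
  have hFsum : Summable F := by
    have hS2 := aux_summable_coeff e hS
    have hC2' := aux_summable_coeff e hC
    have hC2 : Summable (fun p : ι × ι => ‖(inner 𝕜 (e p.1) (C (e p.2)) : 𝕜)‖^2) := by
      have h := (Equiv.prodComm ι ι).summable_iff
        (f := fun p : ι × ι => ‖(inner 𝕜 (e p.1) (C (e p.2)) : 𝕜)‖^2)
      exact h.mp (hC2'.congr fun p => rfl)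
    refine Summable.of_norm ?_
    refine Summable.of_nonneg_of_le (fun p => norm_nonneg _)
      (fun p => ?_) (((hS2.add hC2).div_const 2))
    rw [hF]
    simp only [norm_mul]
    set a := ‖(inner 𝕜 (e p.2) (S (e p.1)) : 𝕜)‖
    set b := ‖(inner 𝕜 (e p.1) (C (e p.2)) : 𝕜)‖
    have ha : 0 ≤ a := norm_nonneg _
    have hb : 0 ≤ b := norm_nonneg _
    have := sq_nonneg (a - b)
    nlinarith
  calc ∑' i, (inner 𝕜 (e i) (C (S (e i))) : 𝕜) = ∑' i, ∑' j, F (i, j) := by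
        exact tsum_congr fun i => ((hrow i).tsum_eq).symm
    _ = ∑' j, ∑' i, F (i, j) := by
        have hunc : Summable (Function.uncurry fun i j => F (i, j)) :=
          hFsum.congr fun p => rfl
        exact (Summable.tsum_comm hunc).symm
    _ = ∑' j, (inner 𝕜 (e j) (S (C (e j))) : 𝕜) := tsum_congr fun j => (hcol j).tsum_eq
theorem aux_proj_inner {P : E →L[𝕜] E} (hP : IsOrthoProj P) (y : E) :
    (inner 𝕜 y (P y) : 𝕜) = ((‖P y‖^2 : ℝ) : 𝕜) := by
  have hPP : P (P y) = P y := by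
    rw [← ContinuousLinearMap.mul_apply, hP.2]
  calc (inner 𝕜 y (P y) : 𝕜) = inner 𝕜 y (P (P y)) := by rw [hPP]
    _ = inner 𝕜 (P y) (P y) := (aux_symm hP.1 y (P y)).symm
    _ = ((‖P y‖^2 : ℝ) : 𝕜) := by rw [inner_self_eq_norm_sq_to_K]; norm_cast

theorem aux_proj_norm_le {P : E →L[𝕜] E} (hP : IsOrthoProj P) (y : E) :
    ‖P y‖^2 ≤ ‖y‖^2 := by
  have h2 : ‖P y‖^2 = re (inner 𝕜 y (P y) : 𝕜) := by
    rw [aux_proj_inner hP y, ofReal_re]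
  have h3 : re (inner 𝕜 y (P y) : 𝕜) ≤ ‖y‖ * ‖P y‖ :=
    le_trans (re_le_norm _) (norm_inner_le_norm _ _)
  nlinarith [sq_nonneg (‖y‖ - ‖P y‖), h2, h3]

theorem aux_trace_proj {ι : Type*} (e : HilbertBasis ι 𝕜 E) {S P : E →L[𝕜] E}
    (hS_sa : IsSelfAdjoint S) (hS_sum : Summable fun i => ‖S (e i)‖^2)
    (hP : IsOrthoProj P) :
    (Summable fun i => ‖P (S (e i))‖^2) ∧
      traceAlong e (P * (S * S)) = ((∑' i, ‖P (S (e i))‖^2 : ℝ) : 𝕜) := by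
  have hsub : Summable fun i => ‖P (S (e i))‖^2 :=
    Summable.of_nonneg_of_le (fun i => by positivity)
      (fun i => aux_proj_norm_le hP (S (e i))) hS_sum
  refine ⟨hsub, ?_⟩
  have hCS : Summable fun i => ‖(P * S) (e i)‖^2 := hsub.congr fun i => rfl
  have hswap := aux_tsum_comm e S (P * S) hS_sum hCS
  have h1 : traceAlong e (P * (S * S)) = ∑' i, (inner 𝕜 (e i) ((P * S) (S (e i))) : 𝕜) := by
    rw [traceAlong]
    exact tsum_congr fun i => rfl
  rw [h1, hswap]
  have h2 : ∀ i, (inner 𝕜 (e i) (S ((P * S) (e i))) : 𝕜) = ((‖P (S (e i))‖^2 : ℝ) : 𝕜) := by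
    intro i
    calc (inner 𝕜 (e i) (S ((P * S) (e i))) : 𝕜)
        = inner 𝕜 (S (e i)) (P (S (e i))) := (aux_symm hS_sa (e i) ((P * S) (e i))).symm
      _ = ((‖P (S (e i))‖^2 : ℝ) : 𝕜) := aux_proj_inner hP (S (e i))
  rw [tsum_congr h2]
  have h3 := (hsub.hasSum.mapL (ofRealCLM : ℝ →L[ℝ] 𝕜)).tsum_eq
  simpa only [ofRealCLM_apply] using h3

theorem aux_fubini {ι K : Type*} (f : ι → K → ℝ) (hnn : ∀ i k, 0 ≤ f i k)
    (r : ι → ℝ) (hfib : ∀ i, HasSum (fun k => f i k) (r i)) (hr : Summable r) :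
    HasSum (fun k => ∑' i, f i k) (∑' i, r i) := by
  have hsum : Summable (fun p : ι × K => f p.1 p.2) := by
    rw [summable_prod_of_nonneg (fun p => hnn p.1 p.2)]
    exact ⟨fun i => (hfib i).summable, hr.congr fun i => ((hfib i).tsum_eq).symm⟩
  have hsum' : Summable (fun p : K × ι => f p.2 p.1) := by
    have h := (Equiv.prodComm K ι).summable_iff (f := fun p : ι × K => f p.1 p.2)
    exact (h.mpr hsum).congr fun p => rfl
  have hfibers : ∀ k, HasSum (fun i => f i k) (∑' i, f i k) :=
    fun k => (hsum'.prod_factor k).hasSum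
  have htotal : HasSum (fun k => ∑' i, f i k) (∑' p : K × ι, f p.2 p.1) :=
    HasSum.prod_fiberwise hsum'.hasSum hfibers
  have heq : (∑' p : K × ι, f p.2 p.1) = ∑' i, r i := by
    have h1 : (∑' p : K × ι, f p.2 p.1) = ∑' p : ι × K, f p.1 p.2 :=
      (Equiv.prodComm K ι).tsum_eq (f := fun p : ι × K => f p.1 p.2)
    rw [h1, Summable.tsum_prod' hsum (fun i => (hfib i).summable)]
    exact tsum_congr fun i => (hfib i).tsum_eq
  rwa [heq] at htotal

set_option maxHeartbeats 1000000 in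
/-- Every self-adjoint, positive, trace-class operator of unit trace on a separable real or
complex Hilbert space induces, via `P ↦ tr (P T)`, a map on orthogonal projections with values
in `[0,1]`, equal to `1` on the identity, and σ-additive: for every finite or countable family
of pairwise orthogonal projections `Pₖ` with join `Q` (the orthogonal projection onto the
closure of the span of the union of the ranges, equivalently the strong limit of the partial
sums, i.e. `∀ x, HasSum (fun k => Pₖ x) (Q x)`), `∑ₖ tr (Pₖ T) = tr (Q T)`. -/
theorem state_induces_probability_measure {𝕜 : Type*} [RCLike 𝕜] {E : Type u}
    [NormedAddCommGroup E] [InnerProductSpace 𝕜 E] [CompleteSpace E]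
    [TopologicalSpace.SeparableSpace E]
    {T : E →L[𝕜] E} (hsa : IsSelfAdjoint T) (hpos : T.IsPositive) (htc : IsTraceClass T)
    (htr : clmTrace T = 1) :
    (∀ P : E →L[𝕜] E, IsOrthoProj P →
      0 ≤ re (clmTrace (P * T)) ∧ re (clmTrace (P * T)) ≤ 1 ∧ im (clmTrace (P * T)) = 0) ∧
    clmTrace ((1 : E →L[𝕜] E) * T) = 1 ∧
    ∀ (K : Type) [Countable K] (P : K → E →L[𝕜] E) (Q : E →L[𝕜] E),
      (∀ k, IsOrthoProj (P k)) → IsOrthoProj Q →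
      (Pairwise fun k l => P k * P l = 0) →
      (∀ x : E, HasSum (fun k => P k x) (Q x)) →
      HasSum (fun k => clmTrace (P k * T)) (clmTrace (Q * T)) := by
  obtain ⟨S, hSpos, hSS⟩ := aux_exists_sqrt hpos
  have hS_sa : IsSelfAdjoint S := hSpos.isSelfAdjoint
  set e := stdHilbertBasis 𝕜 E with he
  have hclm : ∀ A : E →L[𝕜] E, clmTrace A = ∑' i, (inner 𝕜 (e i) (A (e i)) : 𝕜) := fun A => rfl
  have hdiag : ∀ i, (inner 𝕜 (e i) (T (e i)) : 𝕜) = ((‖S (e i)‖^2 : ℝ) : 𝕜) := by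
    intro i
    have h1 : T (e i) = S (S (e i)) := by rw [← hSS]; rfl
    rw [h1, ← aux_symm hS_sa (e i) (S (e i)), inner_self_eq_norm_sq_to_K]
    norm_cast
  have hsum𝕜 : Summable fun i => (inner 𝕜 (e i) (T (e i)) : 𝕜) := by
    by_contra hns
    have h0 : clmTrace T = 0 := by
      rw [hclm T]
      exact tsum_eq_zero_of_not_summable hns
    rw [htr] at h0
    exact one_ne_zero h0
  have hsumS : Summable fun i => ‖S (e i)‖^2 := by
    have h1 := (hsum𝕜.hasSum.mapL (reCLM : 𝕜 →L[ℝ] ℝ)).summable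
    refine h1.congr fun i => ?_
    rw [reCLM_apply, hdiag i, ofReal_re]
  have hsum1 : ∑' i, ‖S (e i)‖^2 = 1 := by
    have h1 := (hsumS.hasSum.mapL (ofRealCLM : ℝ →L[ℝ] 𝕜)).tsum_eq
    have h2 : clmTrace T = ((∑' i, ‖S (e i)‖^2 : ℝ) : 𝕜) := by
      rw [hclm T, tsum_congr hdiag]
      simpa only [ofRealCLM_apply] using h1
    rw [htr] at h2
    exact_mod_cast h2.symm
  have key : ∀ P : E →L[𝕜] E, IsOrthoProj P →
      (Summable fun i => ‖P (S (e i))‖^2) ∧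
        clmTrace (P * T) = ((∑' i, ‖P (S (e i))‖^2 : ℝ) : 𝕜) := by
    intro P hP
    have h := aux_trace_proj e hS_sa hsumS hP
    refine ⟨h.1, ?_⟩
    rw [← hSS]
    exact h.2
  refine ⟨?_, ?_, ?_⟩
  · intro P hP
    obtain ⟨hs, htrP⟩ := key P hP
    rw [htrP]
    refine ⟨?_, ?_, ?_⟩
    · rw [ofReal_re]
      exact tsum_nonneg fun i => by positivity
    · rw [ofReal_re]
      calc ∑' i, ‖P (S (e i))‖^2 ≤ ∑' i, ‖S (e i)‖^2 :=
            Summable.tsum_le_tsum (fun i => aux_proj_norm_le hP _) hs hsumS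
        _ = 1 := hsum1
    · rw [ofReal_im]
  · rw [one_mul]
    exact htr
  · intro K _ P Q hPk hQ _ hQsum
    have hfib : ∀ i, HasSum (fun k => ‖P k (S (e i))‖^2) (‖Q (S (e i))‖^2) := by
      intro i
      have h1 := (hQsum (S (e i))).mapL (innerSL 𝕜 (S (e i)))
      have h1' : HasSum (fun k => ((‖P k (S (e i))‖^2 : ℝ) : 𝕜))
          (((‖Q (S (e i))‖^2 : ℝ) : 𝕜)) := by
        have hfun : (fun k => (innerSL 𝕜 (S (e i))) (P k (S (e i))))
            = fun k => ((‖P k (S (e i))‖^2 : ℝ) : 𝕜) :=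
          funext fun k => aux_proj_inner (hPk k) (S (e i))
        have hval : (innerSL 𝕜 (S (e i))) (Q (S (e i))) = ((‖Q (S (e i))‖^2 : ℝ) : 𝕜) :=
          aux_proj_inner hQ (S (e i))
        rwa [hfun, hval] at h1
      have h2 := h1'.mapL (reCLM : 𝕜 →L[ℝ] ℝ)
      simpa only [reCLM_apply, ofReal_re] using h2
    have hmain : HasSum (fun k => ∑' i, ‖P k (S (e i))‖^2) (∑' i, ‖Q (S (e i))‖^2) :=
      aux_fubini (fun i k => ‖P k (S (e i))‖^2) (fun i k => by positivity)
        (fun i => ‖Q (S (e i))‖^2) hfib (key Q hQ).1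
    have hfinal := hmain.mapL (ofRealCLM : ℝ →L[ℝ] 𝕜)
    have hl : (fun k => clmTrace (P k * T))
        = fun k => (ofRealCLM : ℝ →L[ℝ] 𝕜) (∑' i, ‖P k (S (e i))‖^2) :=
      funext fun k => by rw [ofRealCLM_apply, (key (P k) (hPk k)).2]
    have hr' : (ofRealCLM : ℝ →L[ℝ] 𝕜) (∑' i, ‖Q (S (e i))‖^2) = clmTrace (Q * T) := by
      rw [ofRealCLM_apply, (key Q hQ).2]
    rw [hl, ← hr']
    exact hfinal
end
end

section
/- Let H be a real or complex Hilbert space and A a bounded operator on H. If ∑_{u∈N} ⟨u, |A| u⟩ < +∞ for some Hilbert basis N of H, where |A| = √(A*A), then ∑_{u∈M} ⟨u, |A| u⟩ < +∞ for every Hilbert basis M of H, and the value of the sum ∑_{u∈M} ⟨u, |A| u⟩ does not depend on the Hilbert basis M. -/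
noncomputable section
open RCLike ContinuousLinearMap

universe u v w

variable {𝕜 : Type*} [RCLike 𝕜] {E : Type u} [NormedAddCommGroup E] [InnerProductSpace 𝕜 E]
  [CompleteSpace E]

universe w'


/-- Coefficients of the binomial series for `√(1 - x)`, defined by the recurrence coming
from the Cauchy product identity. -/
noncomputable def sqCoef : ℕ → ℝ
  | 0 => 1
  | 1 => -(1 / 2 : ℝ)
  | n + 2 =>
    -(1 / 2 : ℝ) * ∑ k ∈ (Finset.Ioo 0 (n + 2)).attach,
        sqCoef k.1 * sqCoef (n + 2 - k.1)
  decreasing_by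
  · exact (Finset.mem_Ioo.mp k.2).2
  · have h := Finset.mem_Ioo.mp k.2; omega

lemma sqCoef_zero : sqCoef 0 = 1 := by rw [sqCoef]
lemma sqCoef_one : sqCoef 1 = -(1 / 2 : ℝ) := by rw [sqCoef]

lemma sqCoef_add_two (n : ℕ) :
    sqCoef (n + 2) = -(1 / 2 : ℝ) * ∑ k ∈ Finset.Ioo 0 (n + 2), sqCoef k * sqCoef (n + 2 - k) := by
  rw [sqCoef, ← Finset.sum_attach (Finset.Ioo 0 (n + 2)) (fun k => sqCoef k * sqCoef (n + 2 - k))]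

lemma sqCoef_nonpos : ∀ n, 1 ≤ n → sqCoef n ≤ 0 := by
  intro n
  induction n using Nat.strong_induction_on with
  | _ n ih =>
    match n with
    | 0 => omega
    | 1 => intro _; rw [sqCoef_one]; norm_num
    | n + 2 =>
      intro _
      rw [sqCoef_add_two]
      have h : 0 ≤ ∑ k ∈ Finset.Ioo 0 (n + 2), sqCoef k * sqCoef (n + 2 - k) := by
        apply Finset.sum_nonneg
        intro k hk
        rw [Finset.mem_Ioo] at hk
        have h1 : sqCoef k ≤ 0 := ih k (by omega) (by omega)
        have h2 : sqCoef (n + 2 - k) ≤ 0 := ih (n + 2 - k) (by omega) (by omega)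
        nlinarith
      nlinarith

/-- The Cauchy product identity defining the coefficients. -/
lemma sqCoef_conv (n : ℕ) :
    ∑ k ∈ Finset.range (n + 1), sqCoef k * sqCoef (n - k) =
      if n = 0 then 1 else if n = 1 then -1 else 0 := by
  match n with
  | 0 => simp [sqCoef_zero]
  | 1 => norm_num [Finset.sum_range_succ, sqCoef_zero, sqCoef_one]
  | n + 2 =>
    have hset : Finset.range (n + 3) = insert 0 (insert (n + 2) (Finset.Ioo 0 (n + 2))) := by
      ext k; simp only [Finset.mem_range, Finset.mem_insert, Finset.mem_Ioo]; omega
    rw [hset, Finset.sum_insert (by simp), Finset.sum_insert (by simp),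
      if_neg (by omega), if_neg (by omega)]
    simp only [sqCoef_zero, Nat.sub_self, Nat.sub_zero, one_mul, mul_one]
    have h := sqCoef_add_two n
    linarith

lemma sqCoef_sum_bound : ∀ N, ∑ n ∈ Finset.Icc 1 N, (-sqCoef n) ≤ 1 := by
  intro N
  induction N using Nat.strong_induction_on with
  | _ N ih =>
    match N with
    | 0 => simp
    | 1 => simp [sqCoef_one]; norm_num
    | m + 2 =>
      have hsplit : Finset.Icc 1 (m + 2) = insert 1 (Finset.Icc 2 (m + 2)) := by
        ext k; simp only [Finset.mem_Icc, Finset.mem_insert]; omega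
      rw [hsplit, Finset.sum_insert (by simp)]
      have hterm : ∀ n ∈ Finset.Icc 2 (m + 2),
          -sqCoef n = (1 / 2 : ℝ) * ∑ k ∈ Finset.Ioo 0 n, (-sqCoef k) * (-sqCoef (n - k)) := by
        intro n hn
        rw [Finset.mem_Icc] at hn
        obtain ⟨j, rfl⟩ : ∃ j, n = j + 2 := ⟨n - 2, by omega⟩
        rw [sqCoef_add_two]
        rw [Finset.mul_sum, Finset.mul_sum, ← Finset.sum_neg_distrib]
        apply Finset.sum_congr rfl
        intro k _; ring
      rw [Finset.sum_congr rfl hterm, ← Finset.mul_sum]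
      -- bound the double sum by the square of the partial sum up to m + 1
      set s : ℕ → ℝ := fun n => -sqCoef n with hs
      have hsnn : ∀ k, 1 ≤ k → 0 ≤ s k := fun k hk => neg_nonneg.mpr (sqCoef_nonpos k hk)
      have himg : ∑ n ∈ Finset.Icc 2 (m + 2), ∑ k ∈ Finset.Ioo 0 n, s k * s (n - k)
          = ∑ q ∈ (((Finset.Icc 2 (m + 2)).sigma fun n => Finset.Ioo 0 n).image
              (fun p => (p.2, p.1 - p.2))), s q.1 * s q.2 := by
        rw [Finset.sum_image, Finset.sum_sigma]
        intro p hp q hq hpq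
        simp only [Finset.mem_coe, Finset.mem_sigma, Finset.mem_Icc, Finset.mem_Ioo] at hp hq
        have h1 : p.2 = q.2 := congrArg Prod.fst hpq
        have h2 : p.1 - p.2 = q.1 - q.2 := congrArg Prod.snd hpq
        have : p.1 = q.1 := by omega
        exact Sigma.ext this (by simp [h1])
      rw [himg]
      have hsub : (((Finset.Icc 2 (m + 2)).sigma fun n => Finset.Ioo 0 n).image
            (fun p => (p.2, p.1 - p.2))) ⊆ (Finset.Icc 1 (m + 1)) ×ˢ (Finset.Icc 1 (m + 1)) := by
        intro q hq
        simp only [Finset.mem_image, Finset.mem_sigma, Finset.mem_Icc, Finset.mem_Ioo,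
          Finset.mem_product] at hq ⊢
        obtain ⟨p, ⟨hp1, hp2⟩, rfl⟩ := hq
        omega
      have hbound : ∑ q ∈ (((Finset.Icc 2 (m + 2)).sigma fun n => Finset.Ioo 0 n).image
            (fun p => (p.2, p.1 - p.2))), s q.1 * s q.2
          ≤ ∑ q ∈ (Finset.Icc 1 (m + 1)) ×ˢ (Finset.Icc 1 (m + 1)), s q.1 * s q.2 := by
        apply Finset.sum_le_sum_of_subset_of_nonneg hsub
        intro q hq _
        rw [Finset.mem_product, Finset.mem_Icc, Finset.mem_Icc] at hq
        exact mul_nonneg (hsnn _ hq.1.1) (hsnn _ hq.2.1)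
      have hprod : ∑ q ∈ (Finset.Icc 1 (m + 1)) ×ˢ (Finset.Icc 1 (m + 1)), s q.1 * s q.2
          = (∑ n ∈ Finset.Icc 1 (m + 1), s n) * (∑ n ∈ Finset.Icc 1 (m + 1), s n) := by
        rw [Finset.sum_product, ← Finset.sum_mul_sum]
      have hσ : ∑ n ∈ Finset.Icc 1 (m + 1), s n ≤ 1 := ih (m + 1) (by omega)
      have hσ0 : 0 ≤ ∑ n ∈ Finset.Icc 1 (m + 1), s n :=
        Finset.sum_nonneg fun k hk => hsnn k (Finset.mem_Icc.mp hk).1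
      have hs1 : -sqCoef 1 = (1 / 2 : ℝ) := by rw [sqCoef_one]; norm_num
      nlinarith [hbound, hprod]

lemma summable_abs_sqCoef : Summable (fun n => |sqCoef n|) := by
  apply summable_of_sum_range_le (c := 2) (fun n => abs_nonneg _)
  intro n
  match n with
  | 0 => simp
  | m + 1 =>
    have hsplit : Finset.range (m + 1) = insert 0 (Finset.Icc 1 m) := by
      ext k; simp only [Finset.mem_range, Finset.mem_insert, Finset.mem_Icc]; omega
    rw [hsplit, Finset.sum_insert (by simp)]
    have h1 : ∑ k ∈ Finset.Icc 1 m, |sqCoef k| = ∑ k ∈ Finset.Icc 1 m, (-sqCoef k) := by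
      apply Finset.sum_congr rfl
      intro k hk
      exact abs_of_nonpos (sqCoef_nonpos k (Finset.mem_Icc.mp hk).1)
    have h0 : |sqCoef 0| = 1 := by rw [sqCoef_zero]; norm_num
    rw [h0, h1]
    linarith [sqCoef_sum_bound m]

set_option linter.unusedSectionVars false

local notation "⟪" x ", " y "⟫" => @inner 𝕜 _ _ x y

lemma aux_re_inner_le {T : E →L[𝕜] E} (hT : T.IsPositive) (u v : E) :
    re ⟪u, T v⟫ ≤ (re ⟪u, T u⟫ + re ⟪v, T v⟫) / 2 := by
  have hsym := (isSelfAdjoint_iff_isSymmetric.mp hT.isSelfAdjoint)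
  have hsym' : ∀ a b : E, (⟪T a, b⟫ : 𝕜) = ⟪a, T b⟫ := fun a b => hsym a b
  have h0 := hT.re_inner_nonneg_right (u - v)
  have hexp : re ⟪u - v, T (u - v)⟫
      = re ⟪u, T u⟫ - re ⟪u, T v⟫ - re ⟪v, T u⟫ + re ⟪v, T v⟫ := by
    rw [map_sub, inner_sub_left, inner_sub_right, inner_sub_right]
    simp only [map_sub]
    ring
  have hswap : re ⟪v, T u⟫ = re ⟪u, T v⟫ := by
    rw [← hsym' v u, ← inner_conj_symm u (T v), RCLike.conj_re]
  rw [hexp, hswap] at h0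
  linarith

lemma aux_norm_apply_sq_le {T : E →L[𝕜] E} (hT : T.IsPositive) (x : E) :
    ‖T x‖ ^ 2 ≤ ‖T‖ * re ⟪x, T x⟫ := by
  by_cases hT0 : T = 0
  · simp [hT0]
  have ha : 0 < ‖T‖ := norm_pos_iff.mpr hT0
  set r : ℝ := Real.sqrt ‖T‖ with hr
  have hr0 : 0 < r := Real.sqrt_pos.mpr ha
  have hrr : r * r = ‖T‖ := Real.mul_self_sqrt (le_of_lt ha)
  have key := aux_re_inner_le hT (((r⁻¹ : ℝ) : 𝕜) • T x) (((r : ℝ) : 𝕜) • x)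
  have hre : ∀ (a b : ℝ) (y z : E), re ⟪((a : ℝ) : 𝕜) • y, T (((b : ℝ) : 𝕜) • z)⟫
      = a * b * re ⟪y, T z⟫ := by
    intro a b y z
    rw [map_smul, inner_smul_left, inner_smul_right, RCLike.conj_ofReal, ← mul_assoc,
      ← RCLike.ofReal_mul, RCLike.re_ofReal_mul]
  have h1 : re ⟪((r⁻¹ : ℝ) : 𝕜) • T x, T (((r : ℝ) : 𝕜) • x)⟫ = re ⟪T x, T x⟫ := by
    rw [hre]
    rw [inv_mul_cancel₀ (ne_of_gt hr0), one_mul]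
  have h1' : re (⟪T x, T x⟫ : 𝕜) = ‖T x‖ ^ 2 := by
    rw [inner_self_eq_norm_sq (𝕜 := 𝕜)]
  have h2 : re ⟪((r⁻¹ : ℝ) : 𝕜) • T x, T (((r⁻¹ : ℝ) : 𝕜) • T x)⟫ ≤ ‖T x‖ ^ 2 := by
    rw [hre]
    have hb : re ⟪T x, T (T x)⟫ ≤ ‖T‖ * ‖T x‖ ^ 2 := by
      calc re ⟪T x, T (T x)⟫ ≤ ‖(⟪T x, T (T x)⟫ : 𝕜)‖ := RCLike.re_le_norm _
        _ ≤ ‖T x‖ * ‖T (T x)‖ := norm_inner_le_norm _ _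
        _ ≤ ‖T x‖ * (‖T‖ * ‖T x‖) :=
            mul_le_mul_of_nonneg_left (T.le_opNorm _) (norm_nonneg _)
        _ = ‖T‖ * ‖T x‖ ^ 2 := by ring
    have hinv : r⁻¹ * r⁻¹ = ‖T‖⁻¹ := by rw [← mul_inv, hrr]
    rw [hinv]
    calc ‖T‖⁻¹ * re ⟪T x, T (T x)⟫ ≤ ‖T‖⁻¹ * (‖T‖ * ‖T x‖ ^ 2) :=
          mul_le_mul_of_nonneg_left hb (by positivity)
      _ = ‖T x‖ ^ 2 := by field_simp
  have h3 : re ⟪((r : ℝ) : 𝕜) • x, T (((r : ℝ) : 𝕜) • x)⟫ = ‖T‖ * re ⟪x, T x⟫ := by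
    rw [hre, hrr]
  rw [h1, h1', h3] at key
  linarith
set_option maxHeartbeats 1000000 in
lemma aux_exists_selfadjoint_sq {T : E →L[𝕜] E} (hT : T.IsPositive) :
    ∃ S : E →L[𝕜] E, IsSelfAdjoint S ∧ S * S = T := by
  by_cases hT0 : T = 0
  · exact ⟨0, .zero _, by simp [hT0]⟩
  have ha : 0 < ‖T‖ := norm_pos_iff.mpr hT0
  set X : E →L[𝕜] E := 1 - ((‖T‖⁻¹ : ℝ) : 𝕜) • T with hX
  have hXsa : IsSelfAdjoint X := by
    rw [hX, IsSelfAdjoint, star_sub, star_smul, RCLike.star_def, RCLike.conj_ofReal,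
      star_one, hT.isSelfAdjoint.star_eq]
  -- ‖X x‖ ≤ ‖x‖
  have hX1 : ∀ x : E, ‖X x‖ ≤ ‖x‖ := by
    intro x
    have hexp : ‖X x‖ ^ 2 = ‖x‖ ^ 2 - 2 * (‖T‖⁻¹ * re ⟪x, T x⟫)
        + ‖T‖⁻¹ ^ 2 * ‖T x‖ ^ 2 := by
      have : X x = x - ((‖T‖⁻¹ : ℝ) : 𝕜) • T x := by
        simp [hX, sub_apply, smul_apply]
      rw [this, norm_sub_sq (𝕜 := 𝕜), inner_smul_right, RCLike.re_ofReal_mul, norm_smul]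
      rw [RCLike.norm_ofReal, abs_of_nonneg (by positivity)]
      ring
    have hkey := aux_norm_apply_sq_le hT x
    have hRnn : 0 ≤ re ⟪x, T x⟫ := hT.re_inner_nonneg_right x
    have hsq : ‖X x‖ ^ 2 ≤ ‖x‖ ^ 2 := by
      rw [hexp]
      have : ‖T‖⁻¹ ^ 2 * ‖T x‖ ^ 2 ≤ ‖T‖⁻¹ ^ 2 * (‖T‖ * re ⟪x, T x⟫) :=
        mul_le_mul_of_nonneg_left hkey (by positivity)
      have heq : ‖T‖⁻¹ ^ 2 * (‖T‖ * re ⟪x, T x⟫) = ‖T‖⁻¹ * re ⟪x, T x⟫ := by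
        field_simp
      nlinarith
    nlinarith [norm_nonneg (X x), norm_nonneg x, hsq]
  have hXn : ∀ n : ℕ, ‖X ^ n‖ ≤ 1 := by
    intro n
    have hxn : ∀ y : E, ‖(X ^ n) y‖ ≤ ‖y‖ := by
      induction n with
      | zero => intro y; simp
      | succ m ih =>
        intro y
        rw [pow_succ, ContinuousLinearMap.mul_apply]
        exact (ih (X y)).trans' (le_refl _) |>.trans (hX1 y) |>.trans (le_refl _)
    exact opNorm_le_bound _ zero_le_one (fun y => by simpa using hxn y)
  -- the series
  have hnorm : ∀ n : ℕ, ‖((sqCoef n : ℝ) : 𝕜) • X ^ n‖ ≤ |sqCoef n| := by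
    intro n
    apply opNorm_le_bound _ (abs_nonneg _)
    intro y
    rw [smul_apply, norm_smul, RCLike.norm_ofReal]
    have hy : ‖(X ^ n) y‖ ≤ ‖y‖ := by
      calc ‖(X ^ n) y‖ ≤ ‖X ^ n‖ * ‖y‖ := (X ^ n).le_opNorm y
        _ ≤ 1 * ‖y‖ := mul_le_mul_of_nonneg_right (hXn n) (norm_nonneg y)
        _ = ‖y‖ := one_mul _
    exact mul_le_mul_of_nonneg_left hy (abs_nonneg _)
  have hsumnorm : Summable fun n : ℕ => ‖((sqCoef n : ℝ) : 𝕜) • X ^ n‖ :=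
    Summable.of_nonneg_of_le (fun n => norm_nonneg _) hnorm summable_abs_sqCoef
  have hsum : Summable fun n : ℕ => ((sqCoef n : ℝ) : 𝕜) • X ^ n := hsumnorm.of_norm
  set Y : E →L[𝕜] E := ∑' n : ℕ, ((sqCoef n : ℝ) : 𝕜) • X ^ n with hY
  have hYsa : IsSelfAdjoint Y := by
    rw [IsSelfAdjoint, hY, tsum_star]
    apply tsum_congr
    intro n
    rw [star_smul, RCLike.star_def, RCLike.conj_ofReal, (hXsa.pow n)]
  have hY2 : Y * Y = 1 - X := by
    rw [hY, tsum_mul_tsum_eq_tsum_sum_antidiagonal_of_summable_norm hsumnorm hsumnorm]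
    have hterm : ∀ n : ℕ, ∑ kl ∈ Finset.HasAntidiagonal.antidiagonal n,
        (((sqCoef kl.1 : ℝ) : 𝕜) • X ^ kl.1) * (((sqCoef kl.2 : ℝ) : 𝕜) • X ^ kl.2)
        = (((if n = 0 then 1 else if n = 1 then -1 else 0 : ℝ)) : 𝕜) • X ^ n := by
      intro n
      have h1 : ∀ kl ∈ Finset.HasAntidiagonal.antidiagonal n,
          (((sqCoef kl.1 : ℝ) : 𝕜) • X ^ kl.1) * (((sqCoef kl.2 : ℝ) : 𝕜) • X ^ kl.2)
          = ((sqCoef kl.1 * sqCoef kl.2 : ℝ) : 𝕜) • X ^ n := by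
        intro kl hkl
        rw [Finset.HasAntidiagonal.mem_antidiagonal] at hkl
        rw [smul_mul_smul_comm, ← pow_add, hkl, RCLike.ofReal_mul]
      rw [Finset.sum_congr rfl h1, ← Finset.sum_smul, ← RCLike.ofReal_sum,
        Finset.Nat.sum_antidiagonal_eq_sum_range_succ_mk]
      dsimp only
      rw [sqCoef_conv n]
    rw [tsum_congr hterm]
    rw [tsum_eq_sum (s := {0, 1}) (by
      intro n hn
      simp only [Finset.mem_insert, Finset.mem_singleton] at hn
      push_neg at hn
      rw [if_neg hn.1, if_neg hn.2]
      simp)]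
    rw [Finset.sum_pair (by norm_num)]
    norm_num [sub_eq_add_neg]
  have hSsa : IsSelfAdjoint (((Real.sqrt ‖T‖ : ℝ) : 𝕜) • Y) := by
    rw [IsSelfAdjoint, star_smul, RCLike.star_def, RCLike.conj_ofReal, hYsa.star_eq]
  refine ⟨((Real.sqrt ‖T‖ : ℝ) : 𝕜) • Y, hSsa, ?_⟩
  rw [smul_mul_smul_comm, hY2, ← RCLike.ofReal_mul, Real.mul_self_sqrt (le_of_lt ha)]
  rw [hX, sub_sub_cancel, smul_smul, ← RCLike.ofReal_mul, mul_inv_cancel₀ (ne_of_gt ha)]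
  simp

lemma aux_hasSum_parseval {ι : Type v} (b : HilbertBasis ι 𝕜 E) (x : E) :
    HasSum (fun i => ‖(⟪b i, x⟫ : 𝕜)‖ ^ 2) (‖x‖ ^ 2) := by
  have h1 : Summable fun i => (⟪x, b i⟫ : 𝕜) * ⟪b i, x⟫ := b.summable_inner_mul_inner x x
  have h2 : ∑' i, (⟪x, b i⟫ : 𝕜) * ⟪b i, x⟫ = ⟪x, x⟫ := b.tsum_inner_mul_inner x x
  have h3 : HasSum (fun i => (⟪x, b i⟫ : 𝕜) * ⟪b i, x⟫) ⟪x, x⟫ := h2 ▸ h1.hasSum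
  have h4 := h3.mapL (reCLM : 𝕜 →L[ℝ] ℝ)
  have h5 : ∀ i, reCLM ((⟪x, b i⟫ : 𝕜) * ⟪b i, x⟫) = ‖(⟪b i, x⟫ : 𝕜)‖ ^ 2 := by
    intro i
    have hc : (⟪x, b i⟫ : 𝕜) = (starRingEnd 𝕜) (⟪b i, x⟫ : 𝕜) := (inner_conj_symm _ _).symm
    rw [reCLM_apply, hc, RCLike.conj_mul, ← RCLike.ofReal_pow]
    exact RCLike.ofReal_re (K := 𝕜) _
  have h6 : reCLM (⟪x, x⟫ : 𝕜) = ‖x‖ ^ 2 := by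
    simp only [reCLM_apply]
    exact inner_self_eq_norm_sq x
  rw [h6] at h4
  simp only [h5] at h4
  exact h4

lemma aux_tsum_ofReal_parseval {ι : Type v} (b : HilbertBasis ι 𝕜 E) (x : E) :
    ∑' i, ENNReal.ofReal (‖(⟪b i, x⟫ : 𝕜)‖ ^ 2) = ENNReal.ofReal (‖x‖ ^ 2) := by
  have h := aux_hasSum_parseval b x
  rw [← h.tsum_eq]
  exact (ENNReal.ofReal_tsum_of_nonneg (fun i => by positivity) h.summable).symm

lemma aux_hs_basis_indep {S : E →L[𝕜] E} (hS : IsSelfAdjoint S)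
    {κ : Type w} {κ' : Type w'} (M : HilbertBasis κ 𝕜 E) (M' : HilbertBasis κ' 𝕜 E) :
    ∑' i, ENNReal.ofReal (‖S (M i)‖ ^ 2) = ∑' j, ENNReal.ofReal (‖S (M' j)‖ ^ 2) := by
  have hsym : ∀ a b : E, (⟪S a, b⟫ : 𝕜) = ⟪a, S b⟫ :=
    fun a b => (isSelfAdjoint_iff_isSymmetric.mp hS) a b
  calc ∑' i, ENNReal.ofReal (‖S (M i)‖ ^ 2)
      = ∑' i, ∑' j, ENNReal.ofReal (‖(⟪M' j, S (M i)⟫ : 𝕜)‖ ^ 2) := by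
        exact tsum_congr fun i => (aux_tsum_ofReal_parseval M' (S (M i))).symm
    _ = ∑' j, ∑' i, ENNReal.ofReal (‖(⟪M' j, S (M i)⟫ : 𝕜)‖ ^ 2) := ENNReal.tsum_comm
    _ = ∑' j, ∑' i, ENNReal.ofReal (‖(⟪M i, S (M' j)⟫ : 𝕜)‖ ^ 2) := by
        apply tsum_congr; intro j; apply tsum_congr; intro i
        rw [← hsym (M' j) (M i), ← inner_conj_symm (M i) (S (M' j)), norm_conj]
    _ = ∑' j, ENNReal.ofReal (‖S (M' j)‖ ^ 2) :=
        tsum_congr fun j => aux_tsum_ofReal_parseval M (S (M' j))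

lemma aux_summable_basis {S : E →L[𝕜] E} (hS : IsSelfAdjoint S) {ι : Type v}
    (N : HilbertBasis ι 𝕜 E) (hN : Summable fun i => ‖S (N i)‖ ^ 2)
    {κ : Type w} (M : HilbertBasis κ 𝕜 E) : Summable fun i => ‖S (M i)‖ ^ 2 := by
  have hfin : ∑' i, ENNReal.ofReal (‖S (N i)‖ ^ 2) ≠ ⊤ := by
    rw [← ENNReal.ofReal_tsum_of_nonneg (fun i => by positivity) hN]
    exact ENNReal.ofReal_ne_top
  have heq := aux_hs_basis_indep hS M N
  refine (ENNReal.summable_toReal (heq ▸ hfin)).congr fun i => ?_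
  exact ENNReal.toReal_ofReal (by positivity)

lemma aux_clmAbs_isPositive (A : E →L[𝕜] E) : (clmAbs A).IsPositive := by
  unfold clmAbs
  split_ifs with h
  · exact h.choose_spec.1
  · exact isPositive_zero

lemma aux_summable_of_tsum_ne_top {ι : Type v} {f : ι → ℝ} (hnn : ∀ i, 0 ≤ f i)
    (h : ∑' i, ENNReal.ofReal (f i) ≠ ⊤) : Summable f := by
  refine (ENNReal.summable_toReal h).congr fun i => ?_
  exact ENNReal.toReal_ofReal (hnn i)

lemma aux_tsum_ofReal_ne_top {ι : Type v} {f : ι → ℝ} (hnn : ∀ i, 0 ≤ f i)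
    (hs : Summable f) : ∑' i, ENNReal.ofReal (f i) ≠ ⊤ := by
  rw [← ENNReal.ofReal_tsum_of_nonneg hnn hs]
  exact ENNReal.ofReal_ne_top

/-- If `∑_{u ∈ N} ⟨u, |A| u⟩ < ∞` for some Hilbert basis `N`, then the same holds for every
Hilbert basis `M`, and the value of the sum does not depend on the Hilbert basis. -/
theorem traceNorm_basis_independent {𝕜 : Type*} [RCLike 𝕜] {E : Type u}
    [NormedAddCommGroup E] [InnerProductSpace 𝕜 E] [CompleteSpace E]
    (A : E →L[𝕜] E) {ι : Type v} (N : HilbertBasis ι 𝕜 E)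
    (h : Summable fun i => re (inner 𝕜 (N i) (clmAbs A (N i)) : 𝕜)) :
    (∀ (κ : Type w) (M : HilbertBasis κ 𝕜 E),
      Summable fun i => re (inner 𝕜 (M i) (clmAbs A (M i)) : 𝕜)) ∧
    ∀ (κ : Type w) (κ' : Type w') (M : HilbertBasis κ 𝕜 E) (M' : HilbertBasis κ' 𝕜 E),
      ∑' i, re (inner 𝕜 (M i) (clmAbs A (M i)) : 𝕜) =
        ∑' i, re (inner 𝕜 (M' i) (clmAbs A (M' i)) : 𝕜) := by
  classical
  set T := clmAbs A with hT
  obtain ⟨S, hSsa, hSS⟩ := aux_exists_selfadjoint_sq (aux_clmAbs_isPositive A)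
  have hsym : ∀ a b : E, (inner 𝕜 (S a) b : 𝕜) = inner 𝕜 a (S b) :=
    fun a b => (isSelfAdjoint_iff_isSymmetric.mp hSsa) a b
  have key : ∀ u : E, re (inner 𝕜 u (clmAbs A u) : 𝕜) = ‖S u‖ ^ 2 := by
    intro u
    have h1 : (inner 𝕜 u (clmAbs A u) : 𝕜) = inner 𝕜 (S u) (S u) := by
      rw [show clmAbs A = S * S from hSS.symm, ContinuousLinearMap.mul_apply]
      exact (hsym u (S u)).symm
    rw [h1]
    exact inner_self_eq_norm_sq (S u)
  have hN : Summable (fun i => ‖S (N i)‖ ^ 2) := h.congr fun i => key (N i)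
  constructor
  · intro κ M
    exact (aux_summable_basis hSsa N hN M).congr fun i => (key (M i)).symm
  · intro κ κ' M M'
    have hM := aux_summable_basis hSsa N hN M
    have hM' := aux_summable_basis hSsa N hN M'
    have heq := aux_hs_basis_indep hSsa M M'
    rw [← ENNReal.ofReal_tsum_of_nonneg (fun i => by positivity) hM,
      ← ENNReal.ofReal_tsum_of_nonneg (fun i => by positivity) hM'] at heq
    have hval := (ENNReal.ofReal_eq_ofReal_iff
      (tsum_nonneg fun i => by positivity) (tsum_nonneg fun i => by positivity)).mp heq
    calc ∑' i, re (inner 𝕜 (M i) (clmAbs A (M i)) : 𝕜)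
        = ∑' i, ‖S (M i)‖ ^ 2 := tsum_congr fun i => key (M i)
      _ = ∑' j, ‖S (M' j)‖ ^ 2 := hval
      _ = ∑' j, re (inner 𝕜 (M' j) (clmAbs A (M' j)) : 𝕜) :=
          tsum_congr fun j => (key (M' j)).symm
end
end

section
/- Let H be an infinite-dimensional real Hilbert space. Then there exists a bounded operator A on H with A* = −A and A ∘ A = −I. Any such A satisfies ⟨x, A x⟩ = 0 for every x ∈ H (so ∑_{x∈N} |⟨x, A x⟩| = 0 < ∞ for every Hilbert basis N), yet A is not trace class, since |A| = I and ∑_{u∈N} ⟨u, |A| u⟩ = ∑_{u∈N} 1 = +∞ for every Hilbert basis N. In particular, the condition ∑_{x∈N} |⟨x, A x⟩| < ∞ for every Hilbert basis N does not imply trace class in real Hilbert spaces. -/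
noncomputable section
open RCLike ContinuousLinearMap

universe u v w

variable {𝕜 : Type*} [RCLike 𝕜] {E : Type u} [NormedAddCommGroup E] [InnerProductSpace 𝕜 E]
  [CompleteSpace E]

theorem aux_findim {E : Type*} [NormedAddCommGroup E] [InnerProductSpace ℝ E] [CompleteSpace E]
    {ι : Type*} [Finite ι] (N : HilbertBasis ι ℝ E) : FiniteDimensional ℝ E := by
  have h1 : FiniteDimensional ℝ (Submodule.span ℝ (Set.range N)) :=
    FiniteDimensional.span_of_finite ℝ (Set.finite_range N)
  have h2 : Submodule.span ℝ (Set.range N) = ⊤ := by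
    have h := N.dense_span
    rwa [(Submodule.span ℝ (Set.range N)).closed_of_finiteDimensional.submodule_topologicalClosure_eq] at h
  rw [h2] at h1
  exact (Submodule.topEquiv (R := ℝ) (M := E)).finiteDimensional

theorem aux_exists {E : Type u} [NormedAddCommGroup E] [InnerProductSpace ℝ E] [CompleteSpace E]
    (hinf : ¬ FiniteDimensional ℝ E) :
    ∃ A : E →L[ℝ] E, ContinuousLinearMap.adjoint A = -A ∧ A * A = -1 := by
  classical
  obtain ⟨w, b, -⟩ := exists_hilbertBasis ℝ E
  have hw : Infinite w := by
    by_contra h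
    rw [not_infinite_iff_finite] at h
    exact hinf (aux_findim b)
  have hcard : Nonempty ((w ⊕ w) ≃ w) := by
    rw [← Cardinal.eq]
    simp only [Cardinal.mk_sum, Cardinal.lift_id]
    exact Cardinal.add_eq_self (Cardinal.infinite_iff.mp hw)
  obtain ⟨e⟩ := hcard
  have hc : Orthonormal ℝ (⇑b ∘ ⇑e) := b.orthonormal.comp e e.injective
  have hcsp : ⊤ ≤ (Submodule.span ℝ (Set.range (⇑b ∘ ⇑e))).topologicalClosure := by
    rw [e.surjective.range_comp, b.dense_span]
  let c := HilbertBasis.mk hc hcsp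
  let d : w ⊕ w → E := Sum.elim (fun i => c (Sum.inr i)) (fun i => -c (Sum.inl i))
  have hb := orthonormal_iff_ite.mp c.orthonormal
  have hd : Orthonormal ℝ d := by
    rw [orthonormal_iff_ite]
    rintro (i | i) (j | j) <;>
      simp [d, hb, inner_neg_left, inner_neg_right]
  have hspan : Submodule.span ℝ (Set.range d) = Submodule.span ℝ (Set.range ⇑c) := by
    apply Submodule.span_eq_span
    · rintro _ ⟨(i | i), rfl⟩
      · exact Submodule.subset_span ⟨Sum.inr i, rfl⟩
      · exact neg_mem (Submodule.subset_span ⟨Sum.inl i, rfl⟩)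
    · rintro _ ⟨(i | i), rfl⟩
      · have h3 : c (Sum.inl i) = -d (Sum.inr i) := by simp [d]
        rw [h3]
        exact neg_mem (Submodule.subset_span ⟨Sum.inr i, rfl⟩)
      · exact Submodule.subset_span ⟨Sum.inl i, rfl⟩
  have hdsp : ⊤ ≤ (Submodule.span ℝ (Set.range d)).topologicalClosure := by
    rw [hspan, c.dense_span]
  let D := HilbertBasis.mk hd hdsp
  let J := c.repr.trans D.repr.symm
  let A : E →L[ℝ] E := J.toLinearIsometry.toContinuousLinearMap
  have hApply : ∀ k, A (c k) = d k := by
    intro k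
    have h1 : A (c k) = D.repr.symm (c.repr (c k)) := rfl
    rw [h1, c.repr_self, D.repr_symm_single]
    exact congrFun (HilbertBasis.coe_mk hd hdsp) k
  have hinner : ∀ u v : E, (inner ℝ (A u) (A v) : ℝ) = inner ℝ u v := fun u v =>
    J.inner_map_map u v
  have hdense : Dense (Submodule.span ℝ (Set.range ⇑c) : Set E) :=
    Submodule.dense_iff_topologicalClosure_eq_top.mpr c.dense_span
  have hA2 : A * A = -1 := by
    apply ContinuousLinearMap.ext_on hdense
    rintro _ ⟨(i | i), rfl⟩ <;>
      simp [ContinuousLinearMap.mul_apply, hApply, d, map_neg]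
  have hAA : ∀ x, A (A x) = -x := fun x => by
    simpa [ContinuousLinearMap.mul_apply] using ContinuousLinearMap.ext_iff.mp hA2 x
  have hadj : ContinuousLinearMap.adjoint A = -A := by
    ext x
    refine ext_inner_left ℝ fun y => ?_
    rw [ContinuousLinearMap.adjoint_inner_right]
    have h2 := hinner y (A x)
    rw [hAA x, inner_neg_right] at h2
    simp only [ContinuousLinearMap.neg_apply, inner_neg_right]
    linarith [h2]
  exact ⟨A, hadj, hA2⟩

theorem aux_sqrt_one {E : Type*} [NormedAddCommGroup E] [InnerProductSpace ℝ E] [CompleteSpace E]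
    {S : E →L[ℝ] E} (hpos : S.IsPositive) (hsq : S * S = 1) : S = 1 := by
  ext x
  have hmul : S * (1 - S) = -(1 - S) := by
    rw [mul_sub, mul_one, hsq, neg_sub]
  have hy : S ((1 - S) x) = -((1 - S) x) := by
    have := ContinuousLinearMap.ext_iff.mp hmul x
    simpa [ContinuousLinearMap.mul_apply] using this
  have h0 := hpos.inner_nonneg_left ((1 - S) x)
  rw [hy] at h0
  simp only [inner_neg_left, real_inner_self_eq_norm_sq, RCLike.re_to_real, map_neg,
    Right.nonneg_neg_iff] at h0
  have hz : (1 - S) x = 0 := by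
    have : ‖(1 - S) x‖ = 0 := by nlinarith [norm_nonneg ((1 - S) x)]
    simpa using this
  have hsub : x - S x = 0 := by simpa [ContinuousLinearMap.sub_apply] using hz
  have hx : x = S x := sub_eq_zero.mp hsub
  rw [ContinuousLinearMap.one_apply, ← hx]

/-- In an infinite-dimensional real Hilbert space there exists a bounded operator `A` with
`A* = -A` and `A ∘ A = -I`. Any such `A` satisfies `⟨x, A x⟩ = 0` for every `x` (so
`∑_{x ∈ N} |⟨x, A x⟩| = 0` for every Hilbert basis `N`), yet `A` is not trace class:
`|A| = I` and `∑_{u ∈ N} ⟨u, |A| u⟩` diverges for every Hilbert basis. In particular,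
absolute summability of the diagonal does not imply trace class over the reals. -/
theorem real_counterexample_traceClass {E : Type u} [NormedAddCommGroup E]
    [InnerProductSpace ℝ E] [CompleteSpace E] (hinf : ¬ FiniteDimensional ℝ E) :
    (∃ A : E →L[ℝ] E, ContinuousLinearMap.adjoint A = -A ∧ A * A = -1) ∧
    ∀ A : E →L[ℝ] E, ContinuousLinearMap.adjoint A = -A → A * A = -1 →
      (∀ x : E, (inner ℝ x (A x) : ℝ) = 0) ∧
      (∀ (ι : Type u) (N : HilbertBasis ι ℝ E),
        ∑' i, |(inner ℝ (N i) (A (N i)) : ℝ)| = 0) ∧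
      clmAbs A = 1 ∧
      (∀ (ι : Type u) (N : HilbertBasis ι ℝ E),
        ¬ Summable fun i => re (inner ℝ (N i) (clmAbs A (N i)) : ℝ)) ∧
      ¬ IsTraceClass A := by
  classical
  refine ⟨aux_exists hinf, fun A hadj hA2 => ?_⟩
  have h1 : ∀ x : E, (inner ℝ x (A x) : ℝ) = 0 := by
    intro x
    have h := ContinuousLinearMap.adjoint_inner_left A x x
    rw [hadj] at h
    simp only [ContinuousLinearMap.neg_apply, inner_neg_left] at h
    have hsymm : (inner ℝ (A x) x : ℝ) = inner ℝ x (A x) := real_inner_comm _ _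
    linarith [h, hsymm]
  have hstar : star A * A = 1 := by
    rw [ContinuousLinearMap.star_eq_adjoint, hadj, neg_mul, hA2, neg_neg]
  have hex : ∃ S : E →L[ℝ] E, S.IsPositive ∧ S * S = star A * A :=
    ⟨1, ContinuousLinearMap.isPositive_one, by rw [hstar, one_mul]⟩
  have habs : clmAbs A = 1 := by
    have hdef : clmAbs A = hex.choose := dif_pos hex
    obtain ⟨hp, hs⟩ := hex.choose_spec
    rw [hdef]
    exact aux_sqrt_one hp (hs.trans hstar)
  have hns : ∀ (ι : Type u) (N : HilbertBasis ι ℝ E),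
      ¬ Summable fun i => re (inner ℝ (N i) (clmAbs A (N i)) : ℝ) := by
    intro ι N hsum
    have heq : (fun i => re (inner ℝ (N i) (clmAbs A (N i)) : ℝ)) = fun _ => (1 : ℝ) := by
      funext i
      rw [habs]
      have := orthonormal_iff_ite.mp N.orthonormal i i
      simp only [if_pos rfl] at this
      simpa using this
    rw [heq] at hsum
    have : Finite ι := Finite.of_summable_const one_pos hsum
    exact hinf (aux_findim N)
  refine ⟨h1, ?_, habs, hns, ?_⟩
  · intro ι N
    have : (fun i => |(inner ℝ (N i) (A (N i)) : ℝ)|) = fun _ => (0 : ℝ) := by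
      funext i; rw [h1, abs_zero]
    rw [this, tsum_zero]
  · rintro ⟨ι, N, hsum⟩
    exact hns ι N hsum
end
end

section
/- Let H be a real or complex Hilbert space, A a bounded operator on H, and B a self-adjoint, positive, trace-class operator on H. Let G be a topological group and g ↦ U_g a strongly continuous unitary representation of G on H (i.e. U_e = I, U_{gh} = U_g U_h, each U_g unitary, and g ↦ U_g x is continuous for every x ∈ H). Then the map G ∋ g ↦ tr(A U_g B U_g⁻¹) is continuous (equivalently, g ↦ tr(U_g⁻¹ A U_g B) is continuous). -/
noncomputable section
open RCLike ContinuousLinearMap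

universe u v w

variable {𝕜 : Type*} [RCLike 𝕜] {E : Type u} [NormedAddCommGroup E] [InnerProductSpace 𝕜 E]
  [CompleteSpace E]

namespace TraceAux
open Filter


local notation "⟪" x ", " y "⟫" => @inner 𝕜 _ _ x y

private lemma quad_aux {a b : ℝ} (_ha : 0 ≤ a) (h : ∀ t : ℝ, 0 ≤ a * t ^ 2 + b * t) : b = 0 := by
  by_contra hb
  have hb2 : 0 < b ^ 2 := by positivity
  have hpos : (0:ℝ) < a + 1 := by linarith
  have h1 := h (-b / (a + 1))
  have e : a * (-b / (a+1)) ^ 2 + b * (-b / (a+1)) = -(b^2) * (1/(a+1))^2 := by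
    field_simp
    ring
  rw [e] at h1
  nlinarith [mul_pos hb2 (pow_pos (div_pos one_pos hpos) 2)]

private lemma re_inner_symm {P : E →L[𝕜] E} (hP : IsSelfAdjoint P) (x y : E) :
    ⟪P x, y⟫ = ⟪x, P y⟫ :=
  (isSelfAdjoint_iff_isSymmetric.mp hP) x y

/-- Cauchy-Schwarz type vanishing: positive operator with vanishing quadratic form at `x`
kills `x`. -/
private lemma apply_eq_zero_of_form {P : E →L[𝕜] E} (hP : P.IsPositive) {x : E}
    (hx : re ⟪P x, x⟫ = 0) : P x = 0 := by
  have hsymm := isSelfAdjoint_iff_isSymmetric.mp hP.isSelfAdjoint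
  have key : ∀ t : ℝ, 0 ≤ re ⟪P (P x), P x⟫ * t ^ 2 + (2 * ‖P x‖ ^ 2) * t := by
    intro t
    have h0 : 0 ≤ re ⟪P (x + (t:𝕜) • P x), x + (t:𝕜) • P x⟫ := hP.2 _
    have e : (⟪P (x + (t:𝕜) • P x), x + (t:𝕜) • P x⟫ : 𝕜)
        = ⟪P x, x⟫ + (t:𝕜) * ⟪P (P x), x⟫ + (t:𝕜) * ⟪P x, P x⟫
          + (t:𝕜) * ((t:𝕜) * ⟪P (P x), P x⟫) := by
      simp [map_add, map_smul, inner_add_left, inner_add_right, inner_smul_left,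
        inner_smul_right, conj_ofReal]
      ring
    rw [e] at h0
    have hre1 : re (⟪P (P x), x⟫ : 𝕜) = ‖P x‖ ^ 2 := by
      rw [show (⟪P (P x), x⟫ : 𝕜) = ⟪P x, P x⟫ from hsymm (P x) x,
        ← inner_self_eq_norm_sq (𝕜 := 𝕜)]
    have hre2 : re (⟪P x, P x⟫ : 𝕜) = ‖P x‖ ^ 2 := by
      rw [← inner_self_eq_norm_sq (𝕜 := 𝕜)]
    simp only [map_add, re_ofReal_mul, hx, hre1, hre2] at h0
    nlinarith [h0]
  have := quad_aux (hP.re_inner_nonneg_left (P x)) key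
  have hn : ‖P x‖ ^ 2 = 0 := by linarith
  simpa using (pow_eq_zero_iff (n := 2) (by norm_num)).mp hn




private lemma smul_isPositive {T : E →L[𝕜] E} (hT : T.IsPositive) {r : ℝ} (hr : 0 ≤ r) :
    (((r : 𝕜)) • T).IsPositive := by
  refine isPositive_def'.mpr ⟨?_, ?_⟩
  · rw [IsSelfAdjoint, star_smul, hT.isSelfAdjoint.star_eq, RCLike.star_def, conj_ofReal]
  · intro x
    rw [reApplyInnerSelf, smul_apply, inner_smul_left, conj_ofReal, re_ofReal_mul]
    exact mul_nonneg hr (hT.re_inner_nonneg_left x)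

private lemma conj_isPositive {T S : E →L[𝕜] E} (hT : T.IsPositive) (hS : IsSelfAdjoint S) :
    (S * T * S).IsPositive := by
  have h := hT.conj_adjoint S
  rw [← star_eq_adjoint, hS.star_eq] at h
  rw [show S * T * S = S.comp (T.comp S) from mul_assoc S T S]
  exact h

private lemma sq_isPositive {T : E →L[𝕜] E} (hT : IsSelfAdjoint T) : (T * T).IsPositive := by
  have h := conj_isPositive (isPositive_one (E := E)) hT
  rwa [mul_one] at h

private lemma one_sub_inv_norm_smul_isPositive {D : E →L[𝕜] E} (hD : D.IsPositive) :
    (1 - ((‖D‖⁻¹ : ℝ) : 𝕜) • D).IsPositive := by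
  constructor
  · exact (isPositive_one (E := E)).1.sub (smul_isPositive hD (inv_nonneg.mpr (norm_nonneg D))).1
  · intro x
    rw [reApplyInnerSelf, sub_apply, one_apply_eq_self, smul_apply, inner_sub_left, inner_smul_left,
      conj_ofReal, map_sub, re_ofReal_mul]
    have h1 : re ⟪D x, x⟫ ≤ ‖D‖ * (‖x‖ * ‖x‖) := by
      calc re ⟪D x, x⟫ ≤ ‖(⟪D x, x⟫ : 𝕜)‖ := re_le_norm _
        _ ≤ ‖D x‖ * ‖x‖ := norm_inner_le_norm _ _
        _ ≤ ‖D‖ * ‖x‖ * ‖x‖ := by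
            have := D.le_opNorm x
            nlinarith [norm_nonneg x, norm_nonneg (D x)]
        _ = ‖D‖ * (‖x‖ * ‖x‖) := by ring
    have h2 : ‖D‖⁻¹ * re ⟪D x, x⟫ ≤ ‖x‖ * ‖x‖ := by
      rcases eq_or_lt_of_le (norm_nonneg D) with h | h
      · have hD0 : D = 0 := by rwa [eq_comm, norm_eq_zero] at h
        simp [hD0]
        positivity
      · calc ‖D‖⁻¹ * re ⟪D x, x⟫ ≤ ‖D‖⁻¹ * (‖D‖ * (‖x‖ * ‖x‖)) := by
              exact mul_le_mul_of_nonneg_left h1 (inv_nonneg.mpr (norm_nonneg D))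
          _ = ‖x‖ * ‖x‖ := by field_simp
    have h3 : re (⟪x, x⟫ : 𝕜) = ‖x‖ * ‖x‖ := by
      rw [← inner_self_eq_norm_mul_norm (𝕜 := 𝕜)]
    linarith





/-- form positivity of a product of commuting positive operators, assuming `D ≤ 1`. -/
private lemma form_nonneg_of_comm_aux {R D : E →L[𝕜] E} (hR : R.IsPositive) (hD : D.IsPositive)
    (hD1 : (1 - D).IsPositive) (hcomm : Commute R D) (x : E) :
    0 ≤ re ⟪(R * D) x, x⟫ := by
  set X : ℕ → (E →L[𝕜] E) := fun n => (fun T => T - T * T)^[n] D with hX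
  have hX0 : X 0 = D := rfl
  have hXs : ∀ n, X (n + 1) = X n - X n * X n := by
    intro n
    simp only [hX, Function.iterate_succ_apply']
  have hInv : ∀ n, (X n).IsPositive ∧ (1 - X n).IsPositive ∧ Commute R (X n) := by
    intro n
    induction n with
    | zero => exact ⟨hD, hD1, hcomm⟩
    | succ n ih =>
      obtain ⟨h1, h2, h3⟩ := ih
      refine ⟨?_, ?_, ?_⟩
      · rw [hXs n, show X n - X n * X n
            = X n * (1 - X n) * X n + (1 - X n) * (X n * (1 - X n)) by noncomm_ring]
        have p1 := conj_isPositive h2 h1.isSelfAdjoint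
        have p2 : ((1 - X n) * X n * (1 - X n)).IsPositive := conj_isPositive h1 h2.isSelfAdjoint
        rw [mul_assoc] at p2
        exact p1.add p2
      · rw [hXs n, show 1 - (X n - X n * X n) = (1 - X n) + X n * X n by noncomm_ring]
        exact h2.add (sq_isPositive h1.isSelfAdjoint)
      · rw [hXs n]
        exact h3.sub_right (h3.mul_right h3)
  -- telescoping sum identity, for any operator commuting with all X k
  have htel : ∀ (R' : E →L[𝕜] E), Commute R' D → ∀ n,
      re ⟪(R' * D) x, x⟫
        = re ⟪(R' * X n) x, x⟫ + ∑ k ∈ Finset.range n, re ⟪R' (X k x), X k x⟫ := by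
    intro R' hc n
    have hcX : ∀ k, Commute R' (X k) := by
      intro k
      induction k with
      | zero => exact hc
      | succ k ih => rw [hXs k]; exact ih.sub_right (ih.mul_right ih)
    induction n with
    | zero => simp [hX0]
    | succ n ih =>
      rw [ih, Finset.sum_range_succ]
      have hop : R' * X n = R' * X (n + 1) + X n * (R' * X n) := by
        rw [hXs n, mul_sub]
        have : R' * (X n * X n) = X n * (R' * X n) := by
          rw [← mul_assoc, (hcX n).eq, mul_assoc, (hcX n).eq]
        rw [this]; abel
      have happ : re ⟪(R' * X n) x, x⟫
          = re ⟪(R' * X (n + 1)) x, x⟫ + re ⟪R' (X n x), X n x⟫ := by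
        have e1 : (⟪(X n * (R' * X n)) x, x⟫ : 𝕜) = ⟪R' (X n x), X n x⟫ := by
          have := re_inner_symm (hInv n).1.isSelfAdjoint ((R' * X n) x) x
          simpa [mul_apply_eq_comp] using this
        rw [hop]
        simp only [add_apply, inner_add_left, map_add, e1]
      rw [happ]; ring
  -- summability of ‖X k x‖ ^ 2
  have hform : ∀ k, re ⟪(1 * X k) x, x⟫ = re ⟪X k x, x⟫ := by intro k; rw [one_mul]
  have hsq : ∀ k, re ⟪(1 : E →L[𝕜] E) (X k x), X k x⟫ = ‖X k x‖ ^ 2 := by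
    intro k
    rw [one_apply_eq_self, ← inner_self_eq_norm_sq (𝕜 := 𝕜)]
  have hpartial : ∀ n, ∑ k ∈ Finset.range n, ‖X k x‖ ^ 2 ≤ re ⟪D x, x⟫ := by
    intro n
    have h := htel 1 (Commute.one_left D) n
    rw [one_mul] at h
    have h2 : 0 ≤ re ⟪(1 * X n) x, x⟫ := by
      rw [one_mul]; exact (hInv n).1.re_inner_nonneg_left x
    calc ∑ k ∈ Finset.range n, ‖X k x‖ ^ 2
        = ∑ k ∈ Finset.range n, re ⟪(1 : E →L[𝕜] E) (X k x), X k x⟫ := by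
          refine Finset.sum_congr rfl fun k _ => (hsq k).symm
      _ ≤ re ⟪D x, x⟫ := by rw [h] at *; linarith
  have hsummable : Summable fun k => ‖X k x‖ ^ 2 :=
    summable_of_sum_range_le (fun k => by positivity) hpartial
  have hXx0 : Tendsto (fun k => X k x) atTop (nhds 0) := by
    rw [tendsto_zero_iff_norm_tendsto_zero]
    have h1 := hsummable.tendsto_atTop_zero
    have h2 : Tendsto (fun k => Real.sqrt (‖X k x‖ ^ 2)) atTop (nhds (Real.sqrt 0)) :=
      (Real.continuous_sqrt.continuousAt.tendsto).comp h1
    simpa [Real.sqrt_sq (norm_nonneg _), Real.sqrt_zero] using h2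
  have ha : Tendsto (fun n => re ⟪(R * X n) x, x⟫) atTop (nhds 0) := by
    refine squeeze_zero_norm (f := fun n => re (⟪(R * X n) x, x⟫ : 𝕜))
      (a := fun n => (‖R‖ * ‖x‖) * ‖X n x‖) (fun n => ?_) ?_
    · 
      have : ‖re (⟪(R * X n) x, x⟫ : 𝕜)‖ ≤ ‖(⟪(R * X n) x, x⟫ : 𝕜)‖ := by
        exact norm_re_le_norm _
      refine this.trans ((norm_inner_le_norm _ _).trans ?_)
      rw [mul_apply_eq_comp]
      calc ‖R (X n x)‖ * ‖x‖ ≤ (‖R‖ * ‖X n x‖) * ‖x‖ :=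
            mul_le_mul_of_nonneg_right (R.le_opNorm _) (norm_nonneg x)
        _ = (‖R‖ * ‖x‖) * ‖X n x‖ := by ring
    · have := hXx0.norm
      simpa using (this.const_mul (‖R‖ * ‖x‖))
  refine le_of_tendsto' ha fun n => ?_
  rw [htel R hcomm n]
  have hnn : 0 ≤ ∑ k ∈ Finset.range n, re ⟪R (X k x), X k x⟫ :=
    Finset.sum_nonneg fun k _ => hR.re_inner_nonneg_left _
  linarith





/-- The product of commuting positive operators is positive. -/
private lemma mul_isPositive {R D : E →L[𝕜] E} (hR : R.IsPositive) (hD : D.IsPositive)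
    (hcomm : Commute R D) : (R * D).IsPositive := by
  refine isPositive_def'.mpr ⟨?_, ?_⟩
  · rw [IsSelfAdjoint, star_mul, hR.isSelfAdjoint.star_eq, hD.isSelfAdjoint.star_eq, ← hcomm.eq]
  · intro x
    rw [reApplyInnerSelf]
    by_cases h0 : D = 0
    · simp [h0]
    · have hc : (0:ℝ) < ‖D‖ := norm_pos_iff.mpr h0
      set D' : E →L[𝕜] E := ((‖D‖⁻¹ : ℝ) : 𝕜) • D with hD'der
      have hD'pos : D'.IsPositive := smul_isPositive hD (inv_nonneg.mpr (norm_nonneg D))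
      have hD'1 : (1 - D').IsPositive := one_sub_inv_norm_smul_isPositive hD
      have hcomm' : Commute R D' := hcomm.smul_right _
      have key := form_nonneg_of_comm_aux hR hD'pos hD'1 hcomm' x
      have hDD : R * D = ((‖D‖ : ℝ) : 𝕜) • (R * D') := by
        rw [hD'der, mul_smul_comm, smul_smul, ← ofReal_mul,
          mul_inv_cancel₀ hc.ne', ofReal_one, one_smul]
      rw [hDD, smul_apply, inner_smul_left, conj_ofReal, re_ofReal_mul]
      exact mul_nonneg hc.le key

/-- Uniqueness of the positive square root. -/
private lemma sqrt_unique {S B : E →L[𝕜] E} (hS : S.IsPositive) (hB : B.IsPositive)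
    (h : S * S = B * B) : S = B := by
  set T : E →L[𝕜] E := S - B with hT
  have hTsa : IsSelfAdjoint T := hS.isSelfAdjoint.sub hB.isSelfAdjoint
  have h1 : S * T + T * B = 0 := by
    have : S * (S - B) + (S - B) * B = S * S - B * B := by noncomm_ring
    rw [← hT] at this
    rw [this, h, sub_self]
  have h2 : B * T + T * S = 0 := by
    have : B * (S - B) + (S - B) * S = S * S - B * B := by noncomm_ring
    rw [← hT] at this
    rw [this, h, sub_self]
  have hanti : (S + B) * T = -(T * (S + B)) := by
    have e1 : (S + B) * T + T * (S + B) = (S * T + T * B) + (B * T + T * S) := by noncomm_ring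
    rw [h1, h2, add_zero] at e1
    linear_combination (norm := noncomm_ring) e1
  have hA : (S + B) * (T * T) = -(T * ((S + B) * T)) := by
    have e := congrArg (fun X : E →L[𝕜] E => X * T) hanti
    simpa [mul_assoc, neg_mul] using e
  have hB' : (T * T) * (S + B) = -(T * ((S + B) * T)) := by
    have e : T * ((S + B) * T) = T * -(T * (S + B)) := by rw [hanti]
    rw [mul_neg] at e
    have e2 : -(T * ((S + B) * T)) = T * (T * (S + B)) := by rw [e, neg_neg]
    rw [e2, mul_assoc]
  have hcomm : Commute (S + B) (T * T) := hA.trans hB'.symm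
  have hSB : (S + B).IsPositive := hS.add hB
  have hpos : ((S + B) * (T * T)).IsPositive := mul_isPositive hSB (sq_isPositive hTsa) hcomm
  have hneg : ∀ x, re ⟪((S + B) * (T * T)) x, x⟫ ≤ 0 := by
    intro x
    have hop := hA
    have hTpos : (T * ((S + B) * T)).IsPositive := by
      have := conj_isPositive hSB hTsa
      rwa [mul_assoc] at this
    have := hTpos.re_inner_nonneg_left x
    rw [hop]
    simp only [neg_apply, inner_neg_left, map_neg]
    linarith
  have hzero : (S + B) * (T * T) = 0 := by
    ext x
    exact apply_eq_zero_of_form hpos (le_antisymm (hneg x) (hpos.re_inner_nonneg_left x))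
  have hTx : ∀ x, T x = 0 := by
    intro x
    have hform : re ⟪S (T x), T x⟫ + re ⟪B (T x), T x⟫ = 0 := by
      have e0 : T * ((S + B) * T) = 0 := by
        rw [hA] at hzero
        simpa [neg_eq_zero] using hzero
      have e1 : (0:ℝ) = re ⟪(T * ((S + B) * T)) x, x⟫ := by rw [e0]; simp
      have e2 : (⟪(T * ((S + B) * T)) x, x⟫ : 𝕜) = ⟪(S + B) (T x), T x⟫ := by
        rw [mul_apply_eq_comp]
        rw [re_inner_symm hTsa (((S + B) * T) x) x]
        rw [mul_apply_eq_comp]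
      rw [e1, e2]
      simp [add_apply, inner_add_left]
    have hSz : S (T x) = 0 := by
      refine apply_eq_zero_of_form hS ?_
      have := hS.re_inner_nonneg_left (T x)
      have := hB.re_inner_nonneg_left (T x)
      linarith
    have hBz : B (T x) = 0 := by
      refine apply_eq_zero_of_form hB ?_
      have := hS.re_inner_nonneg_left (T x)
      have := hB.re_inner_nonneg_left (T x)
      linarith
    have hTTx : T (T x) = 0 := by
      have : T (T x) = S (T x) - B (T x) := by rw [hT]; simp [sub_apply]
      rw [this, hSz, hBz, sub_zero]
    have e := re_inner_symm hTsa x (T x)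
    rw [hTTx, inner_zero_right] at e
    exact inner_self_eq_zero.mp e
  have : T = 0 := by ext x; exact hTx x
  have := sub_eq_zero.mp (by rw [← hT]; exact this)
  exact this





/-- A positive contraction satisfies `‖P x‖ ^ 2 ≤ re ⟪P x, x⟫`. -/
private lemma sq_norm_le_form {P : E →L[𝕜] E} (hP : P.IsPositive) (h1 : (1 - P).IsPositive)
    (x : E) : ‖P x‖ ^ 2 ≤ re ⟪P x, x⟫ := by
  have hcomm : Commute P (1 - P) := by
    unfold Commute SemiconjBy
    noncomm_ring
  have hpos : (P * (1 - P)).IsPositive := mul_isPositive hP h1 hcomm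
  have hident : P - P * P = P * (1 - P) := by noncomm_ring
  have h2 := hpos.re_inner_nonneg_left x
  rw [← hident] at h2
  have e1 : re ⟪(P - P * P) x, x⟫ = re ⟪P x, x⟫ - re ⟪P (P x), x⟫ := by
    simp [sub_apply, inner_sub_left, mul_apply_eq_comp]
  have e2 : re (⟪P (P x), x⟫ : 𝕜) = ‖P x‖ ^ 2 := by
    rw [show (⟪P (P x), x⟫ : 𝕜) = ⟪P x, P x⟫ from re_inner_symm hP.isSelfAdjoint (P x) x,
      ← inner_self_eq_norm_sq (𝕜 := 𝕜)]
  rw [e1, e2] at h2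
  linarith

/-- Existence of a selfadjoint square root of a positive operator. -/
private lemma exists_sqrt {B : E →L[𝕜] E} (hB : B.IsPositive) :
    ∃ C : E →L[𝕜] E, IsSelfAdjoint C ∧ C * C = B := by
  by_cases hB0 : B = 0
  · refine ⟨0, ?_, by rw [hB0, mul_zero]⟩
    simp [IsSelfAdjoint]
  have hc : (0:ℝ) < ‖B‖ := norm_pos_iff.mpr hB0
  set σ : 𝕜 := ((1/2 : ℝ) : 𝕜) with hσ
  set D : E →L[𝕜] E := ((‖B‖⁻¹ : ℝ) : 𝕜) • B with hDdef
  have hD : D.IsPositive := smul_isPositive hB (inv_nonneg.mpr (norm_nonneg B))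
  have hD1 : (1 - D).IsPositive := one_sub_inv_norm_smul_isPositive hB
  set Y : ℕ → (E →L[𝕜] E) := fun n => (fun T => T + σ • (D - T * T))^[n] 0 with hY
  have hY0 : Y 0 = 0 := rfl
  have hYs : ∀ n, Y (n + 1) = Y n + σ • (D - Y n * Y n) := by
    intro n
    simp only [hY, Function.iterate_succ_apply']
  -- the invariant
  have hInv : ∀ n, (Y n).IsPositive ∧ (1 - Y n).IsPositive ∧ (D - Y n * Y n).IsPositive
      ∧ Commute D (Y n) := by
    intro n
    induction n with
    | zero =>
      rw [hY0, mul_zero, sub_zero, sub_zero]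
      exact ⟨isPositive_zero, isPositive_one, hD, Commute.zero_right D⟩
    | succ n ih =>
      obtain ⟨h1, h2, h3, h4⟩ := ih
      set Z := Y n
      set En := D - Z * Z with hEn
      have hcommZE : Commute Z En := by
        refine Commute.sub_right h4.symm ?_
        exact (Commute.refl Z).mul_right (Commute.refl Z)
      have hYpos : (Y (n + 1)).IsPositive := by
        rw [hYs n]
        exact h1.add (smul_isPositive h3 (by norm_num))
      have hKpos : (1 - Y (n + 1)).IsPositive := by
        have hident : 1 - Y (n + 1) = σ • ((1 - Z) * (1 - Z) + (1 - D)) := by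
          rw [hYs n, show (1 - Z) * (1 - Z) = 1 - Z - Z + Z * Z from by noncomm_ring, hσ]
          match_scalars <;> push_cast <;> ring
        rw [hident, hσ]
        exact smul_isPositive ((sq_isPositive h2.isSelfAdjoint).add hD1) (by norm_num)
      have hEpos : (D - Y (n + 1) * Y (n + 1)).IsPositive := by
        set W : E →L[𝕜] E := σ • ((1 - Z) + (1 - Y (n + 1))) with hW
        have hWpos : W.IsPositive := by
          rw [hW, hσ]
          exact smul_isPositive (h2.add hKpos) (by norm_num)
        have hcommEW : Commute En W := by
          rw [hW, hYs n]
          refine Commute.smul_right ?_ _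
          refine Commute.add_right ?_ ?_
          · exact (Commute.one_right En).sub_right hcommZE.symm
          · refine (Commute.one_right En).sub_right ?_
            exact (hcommZE.symm).add_right ((Commute.refl En).smul_right σ)
        have hZE : Z * En = En * Z := hcommZE.eq
        have hDEn : D = En + Z * Z := by rw [hEn]; abel
        have hident : (En + Z * Z) - Y (n + 1) * Y (n + 1) = En * W := by
          rw [hW, hYs n, show Y n = Z from rfl, ← hEn, hσ]
          simp only [mul_add, add_mul, mul_sub, sub_mul, smul_mul_assoc, mul_smul_comm,
            mul_one, one_mul, smul_sub, smul_add, smul_smul, hZE]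
          match_scalars <;> push_cast <;> ring
        rw [hDEn, hident]
        exact mul_isPositive h3 hWpos hcommEW
      have hcommD : Commute D (Y (n + 1)) := by
        rw [hYs n]
        refine h4.add_right (Commute.smul_right ?_ _)
        exact (Commute.refl D).sub_right (h4.mul_right h4)
      exact ⟨hYpos, hKpos, hEpos, hcommD⟩
  -- monotonicity and uniform bounds
  have hmono : ∀ n m, n ≤ m → (Y m - Y n).IsPositive := by
    intro n m hnm
    induction m, hnm using Nat.le_induction with
    | base => rw [sub_self]; exact isPositive_zero
    | succ m _ ih =>
      have : Y (m + 1) - Y n = (Y m - Y n) + σ • (D - Y m * Y m) := by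
        rw [hYs m]; abel
      rw [this, hσ]
      exact ih.add (smul_isPositive (hInv m).2.2.1 (by norm_num))
  have hbnd : ∀ n m, n ≤ m → (1 - (Y m - Y n)).IsPositive := by
    intro n m hnm
    have : 1 - (Y m - Y n) = (1 - Y m) + Y n := by abel
    rw [this]
    exact ((hInv m).2.1).add (hInv n).1
  have hYnorm : ∀ n x, ‖Y n x‖ ≤ ‖x‖ := by
    intro n x
    have h1 := sq_norm_le_form (hInv n).1 (hInv n).2.1 x
    have h2 : re ⟪Y n x, x⟫ ≤ ‖Y n x‖ * ‖x‖ := (re_le_norm _).trans (norm_inner_le_norm _ _)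
    rcases eq_or_lt_of_le (norm_nonneg (Y n x)) with h | h
    · rw [← h]; exact norm_nonneg x
    · nlinarith
  -- the sequence (Y n x) is Cauchy
  have hcauchy : ∀ x : E, CauchySeq fun n => Y n x := by
    intro x
    have hfmono : Monotone fun n => re ⟪Y n x, x⟫ := by
      intro n m hnm
      have := (hmono n m hnm).re_inner_nonneg_left x
      simp only [sub_apply, inner_sub_left, map_sub] at this
      simpa using this
    have hfbdd : ∀ n, re ⟪Y n x, x⟫ ≤ ‖x‖ ^ 2 := by
      intro n
      calc re ⟪Y n x, x⟫ ≤ ‖(⟪Y n x, x⟫ : 𝕜)‖ := re_le_norm _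
        _ ≤ ‖Y n x‖ * ‖x‖ := norm_inner_le_norm _ _
        _ ≤ ‖x‖ * ‖x‖ := mul_le_mul_of_nonneg_right (hYnorm n x) (norm_nonneg x)
        _ = ‖x‖ ^ 2 := by ring
    have hfcauchy : CauchySeq fun n => re ⟪Y n x, x⟫ :=
      (tendsto_atTop_ciSup hfmono ⟨‖x‖ ^ 2, fun y ⟨n, hn⟩ => hn ▸ hfbdd n⟩).cauchySeq
    rw [Metric.cauchySeq_iff] at *
    intro ε hε
    obtain ⟨N, hN⟩ := hfcauchy (ε ^ 2) (by positivity)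
    refine ⟨N, fun m hm n hn => ?_⟩
    -- wlog n ≤ m
    have key : ∀ a b, N ≤ a → N ≤ b → b ≤ a → dist (Y a x) (Y b x) < ε := by
      intro a b ha hb hba
      have hP : (Y a - Y b).IsPositive := hmono b a hba
      have hP1 : (1 - (Y a - Y b)).IsPositive := hbnd b a hba
      have hsq := sq_norm_le_form hP hP1 x
      have hd := hN a ha b hb
      rw [Real.dist_eq] at hd
      have e1 : re ⟪(Y a - Y b) x, x⟫ = re ⟪Y a x, x⟫ - re ⟪Y b x, x⟫ := by
        simp [sub_apply, inner_sub_left]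
      have e2 : ‖(Y a - Y b) x‖ ^ 2 < ε ^ 2 := by
        rw [e1] at hsq
        have := abs_le.mp hd.le
        nlinarith [abs_nonneg (re ⟪Y a x, x⟫ - re ⟪Y b x, x⟫), le_abs_self
          (re ⟪Y a x, x⟫ - re ⟪Y b x, x⟫)]
      have e3 : ‖(Y a - Y b) x‖ < ε := lt_of_pow_lt_pow_left₀ 2 hε.le e2
      rw [dist_eq_norm]
      simpa [sub_apply] using e3
    rcases le_total n m with h | h
    · exact key m n hm hn h
    · rw [dist_comm]; exact key n m hn hm h
  -- the strong limit
  have hconv : ∀ x : E, ∃ l, Tendsto (fun n => Y n x) atTop (nhds l) :=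
    fun x => cauchySeq_tendsto_of_complete (hcauchy x)
  choose g hg using hconv
  have hgadd : ∀ x y, g (x + y) = g x + g y := by
    intro x y
    refine tendsto_nhds_unique (hg (x + y)) ?_
    have := (hg x).add (hg y)
    simpa [map_add] using this
  have hgsmul : ∀ (a : 𝕜) (x : E), g (a • x) = a • g x := by
    intro a x
    refine tendsto_nhds_unique (hg (a • x)) ?_
    have := (hg x).const_smul a
    simpa [map_smul] using this
  have hgbound : ∀ x, ‖g x‖ ≤ 1 * ‖x‖ := by
    intro x
    rw [one_mul]
    exact le_of_tendsto (hg x).norm (Eventually.of_forall fun n => hYnorm n x)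
  set C : E →L[𝕜] E := LinearMap.mkContinuous
    { toFun := g, map_add' := hgadd, map_smul' := hgsmul } 1 hgbound with hCdef
  have hC : ∀ x, Tendsto (fun n => Y n x) atTop (nhds (C x)) := hg
  -- selfadjointness
  have hCsa : IsSelfAdjoint C := by
    rw [isSelfAdjoint_iff_isSymmetric]
    intro x y
    have t1 : Tendsto (fun n => (⟪Y n x, y⟫ : 𝕜)) atTop (nhds ⟪C x, y⟫) :=
      (hC x).inner tendsto_const_nhds
    have t2 : Tendsto (fun n => (⟪Y n x, y⟫ : 𝕜)) atTop (nhds ⟪x, C y⟫) := by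
      have : Tendsto (fun n => (⟪x, Y n y⟫ : 𝕜)) atTop (nhds ⟪x, C y⟫) :=
        tendsto_const_nhds.inner (hC y)
      refine this.congr fun n => ?_
      exact (re_inner_symm (hInv n).1.isSelfAdjoint x y).symm
    exact tendsto_nhds_unique t1 t2
  -- C * C = D
  have hCC : C * C = D := by
    ext x
    rw [mul_apply_eq_comp]
    have t1 : Tendsto (fun n => Y n (Y n x)) atTop (nhds (C (C x))) := by
      rw [← tendsto_sub_nhds_zero_iff]
      refine squeeze_zero_norm (a := fun n => ‖Y n x - C x‖ + ‖Y n (C x) - C (C x)‖)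
        (fun n => ?_) ?_
      · have e : Y n (Y n x) - C (C x) = Y n (Y n x - C x) + (Y n (C x) - C (C x)) := by
          rw [map_sub]; abel
        rw [e]
        exact (norm_add_le _ _).trans (add_le_add_left (hYnorm n _) _)
      · have l1 : Tendsto (fun n => ‖Y n x - C x‖) atTop (nhds 0) :=
          tendsto_zero_iff_norm_tendsto_zero.mp (tendsto_sub_nhds_zero_iff.mpr (hC x))
        have l2 : Tendsto (fun n => ‖Y n (C x) - C (C x)‖) atTop (nhds 0) :=
          tendsto_zero_iff_norm_tendsto_zero.mp (tendsto_sub_nhds_zero_iff.mpr (hC (C x)))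
        simpa using l1.add l2
    have t2 : Tendsto (fun n => Y n (Y n x)) atTop (nhds (D x)) := by
      have hrec : ∀ n, Y n (Y n x) = D x - (2 : 𝕜) • (Y (n + 1) x - Y n x) := by
        intro n
        have e := congrArg (fun T => T x) (hYs n)
        simp only [add_apply, smul_apply, sub_apply, mul_apply_eq_comp] at e
        rw [e, hσ]
        match_scalars <;> push_cast <;> ring
      have l1 : Tendsto (fun n => Y (n + 1) x - Y n x) atTop (nhds 0) := by
        have h1 : Tendsto (fun n => Y (n + 1) x) atTop (nhds (C x)) :=
          (hC x).comp (tendsto_add_atTop_nat 1)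
        simpa using h1.sub (hC x)
      have l2 : Tendsto (fun n => D x - (2 : 𝕜) • (Y (n + 1) x - Y n x)) atTop
          (nhds (D x - (2 : 𝕜) • (0 : E))) := tendsto_const_nhds.sub (l1.const_smul _)
      simp only [smul_zero, sub_zero] at l2
      exact Tendsto.congr (fun n => (hrec n).symm) l2
    exact tendsto_nhds_unique t1 t2
  -- rescale
  refine ⟨((Real.sqrt ‖B‖ : ℝ) : 𝕜) • C, ?_, ?_⟩
  · rw [IsSelfAdjoint, star_smul, hCsa.star_eq, RCLike.star_def, conj_ofReal]
  · rw [smul_mul_smul_comm, hCC, hDdef, smul_smul, ← ofReal_mul, ← ofReal_mul,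
      Real.mul_self_sqrt (norm_nonneg B), mul_inv_cancel₀ hc.ne', ofReal_one, one_smul]




/-- Parseval for squared norms of coefficients. -/
private lemma hasSum_sq_inner {ι' : Type v} (M : HilbertBasis ι' 𝕜 E) (y : E) :
    HasSum (fun i => ‖(⟪M i, y⟫ : 𝕜)‖ ^ 2) (‖y‖ ^ 2) := by
  have h := (M.hasSum_inner_mul_inner y y).mapL (reCLM (K := 𝕜))
  have h2 : HasSum (fun i => re ((⟪y, M i⟫ : 𝕜) * ⟪M i, y⟫)) (re (⟪y, y⟫ : 𝕜)) := by
    simpa using h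
  rw [inner_self_eq_norm_sq y] at h2
  refine h2.congr_fun fun i => ?_
  rw [← inner_conj_symm y (M i), RCLike.conj_mul, ← ofReal_pow, ofReal_re]

private lemma unitary_norm_apply {V : E →L[𝕜] E} (hV : V ∈ unitary (E →L[𝕜] E)) (x : E) :
    ‖V x‖ = ‖x‖ := by
  have h1 : star V * V = 1 := (Unitary.mem_iff.mp hV).1
  have h2 : (⟪V x, V x⟫ : 𝕜) = ⟪x, x⟫ := by
    have e : (⟪(star V * V) x, x⟫ : 𝕜) = ⟪V x, V x⟫ := by
      rw [mul_apply_eq_comp, star_eq_adjoint, adjoint_inner_left]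
    rw [← e, h1, one_apply_eq_self]
  have h3 : ‖V x‖ ^ 2 = ‖x‖ ^ 2 := by
    rw [← inner_self_eq_norm_sq (𝕜 := 𝕜), ← inner_self_eq_norm_sq (𝕜 := 𝕜) x, h2]
  have := congrArg Real.sqrt h3
  rwa [Real.sqrt_sq (norm_nonneg _), Real.sqrt_sq (norm_nonneg _)] at this

/-- The main trace identity. -/
private lemma traceAlong_eq {ι' : Type v} {ι : Type w} (M : HilbertBasis ι' 𝕜 E)
    (N : HilbertBasis ι 𝕜 E) (A T : E →L[𝕜] E) (hsum : Summable fun j => ‖T (N j)‖ ^ 2) :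
    ∑' i, (⟪M i, (A * (T * star T)) (M i)⟫ : 𝕜) = ∑' j, (⟪T (N j), A (T (N j))⟫ : 𝕜) := by
  set F : ι' × ι → 𝕜 := fun p => ⟪M p.1, A (T (N p.2))⟫ * ⟪T (N p.2), M p.1⟫ with hF
  set G : ι × ι' → ℝ := fun q =>
    (‖(⟪M q.2, A (T (N q.1))⟫ : 𝕜)‖ ^ 2 + ‖(⟪T (N q.1), M q.2⟫ : 𝕜)‖ ^ 2) / 2 with hGdef
  have hG : Summable G := by
    rw [summable_prod_of_nonneg (fun q => by positivity)]
    constructor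
    · intro j
      have p1 := (hasSum_sq_inner M (A (T (N j)))).summable
      have p2 : Summable fun i => ‖(⟪T (N j), M i⟫ : 𝕜)‖ ^ 2 := by
        refine (hasSum_sq_inner M (T (N j))).summable.congr fun i => ?_
        rw [norm_inner_symm]
      exact (p1.add p2).div_const 2
    · refine Summable.of_nonneg_of_le (fun j => ?_) (fun j => ?_)
        (hsum.mul_left ((‖A‖ ^ 2 + 1) / 2))
      · exact tsum_nonneg fun i => by positivity
      · have p2 : HasSum (fun i => ‖(⟪T (N j), M i⟫ : 𝕜)‖ ^ 2) (‖T (N j)‖ ^ 2) := by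
          refine (hasSum_sq_inner M (T (N j))).congr_fun fun i => ?_
          rw [norm_inner_symm]
        have hs : HasSum (fun i => G (j, i)) ((‖A (T (N j))‖ ^ 2 + ‖T (N j)‖ ^ 2) / 2) :=
          ((hasSum_sq_inner M (A (T (N j)))).add p2).div_const 2
        rw [hs.tsum_eq]
        have hA := A.le_opNorm (T (N j))
        have h1 : ‖A (T (N j))‖ ^ 2 ≤ ‖A‖ ^ 2 * ‖T (N j)‖ ^ 2 := by
          nlinarith [norm_nonneg (A (T (N j))), norm_nonneg (T (N j)), A.opNorm_nonneg]
        nlinarith [sq_nonneg (‖T (N j)‖)]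
  have hFsummable : Summable F := by
    refine Summable.of_norm_bounded (g := fun p => G p.swap) hG.prod_symm fun p => ?_
    show ‖F p‖ ≤ G p.swap
    rw [hF, norm_mul]
    have : G p.swap = (‖(⟪M p.1, A (T (N p.2))⟫ : 𝕜)‖ ^ 2
        + ‖(⟪T (N p.2), M p.1⟫ : 𝕜)‖ ^ 2) / 2 := rfl
    rw [this]
    nlinarith [norm_nonneg (⟪M p.1, A (T (N p.2))⟫ : 𝕜), norm_nonneg (⟪T (N p.2), M p.1⟫ : 𝕜),
      sq_nonneg (‖(⟪M p.1, A (T (N p.2))⟫ : 𝕜)‖ - ‖(⟪T (N p.2), M p.1⟫ : 𝕜)‖)]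
  have hrow : ∀ i, HasSum (fun j => F (i, j)) (⟪M i, (A * (T * star T)) (M i)⟫ : 𝕜) := by
    intro i
    have key := N.hasSum_inner_mul_inner ((adjoint T) ((adjoint A) (M i))) ((adjoint T) (M i))
    have hval : (⟪(adjoint T) ((adjoint A) (M i)), (adjoint T) (M i)⟫ : 𝕜)
        = ⟪M i, (A * (T * star T)) (M i)⟫ := by
      rw [adjoint_inner_left, adjoint_inner_left]
      simp [mul_apply_eq_comp, star_eq_adjoint]
    rw [hval] at key
    refine key.congr_fun fun j => ?_
    have e1 : (⟪(adjoint T) ((adjoint A) (M i)), N j⟫ : 𝕜) = ⟪M i, A (T (N j))⟫ := by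
      rw [← inner_conj_symm ((adjoint T) ((adjoint A) (M i))) (N j), adjoint_inner_right,
        adjoint_inner_right, inner_conj_symm]
    have e2 : (⟪N j, (adjoint T) (M i)⟫ : 𝕜) = ⟪T (N j), M i⟫ := adjoint_inner_right _ _ _
    rw [hF]
    rw [e1, e2]
  have hcol : ∀ j, HasSum (fun i => F (i, j)) (⟪T (N j), A (T (N j))⟫ : 𝕜) := by
    intro j
    have key := M.hasSum_inner_mul_inner (T (N j)) (A (T (N j)))
    refine key.congr_fun fun i => ?_
    rw [hF]
    ring
  have h1 : HasSum (fun i => (⟪M i, (A * (T * star T)) (M i)⟫ : 𝕜)) (∑' p, F p) :=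
    hFsummable.hasSum.prod_fiberwise hrow
  have h2 : HasSum (fun j => (⟪T (N j), A (T (N j))⟫ : 𝕜)) (∑' q : ι × ι', F q.swap) :=
    (hFsummable.prod_symm).hasSum.prod_fiberwise fun j => by simpa using hcol j
  have h3 : ∑' q : ι × ι', F q.swap = ∑' p, F p := by
    have := (Equiv.prodComm ι ι').tsum_eq F
    simpa [Equiv.prodComm] using this
  rw [h1.tsum_eq, h2.tsum_eq, h3]


end TraceAux

/-- If `g ↦ U_g` is a strongly continuous unitary representation of a topological group `G`,
`A` is bounded and `B` is self-adjoint, positive and trace class, then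
`g ↦ tr (A U_g B U_g⁻¹)` is continuous. -/
theorem trace_continuous_of_strongly_continuous_rep {𝕜 : Type*} [RCLike 𝕜] {E : Type u}
    [NormedAddCommGroup E] [InnerProductSpace 𝕜 E] [CompleteSpace E]
    (A : E →L[𝕜] E) {B : E →L[𝕜] E} (hsa : IsSelfAdjoint B) (hpos : B.IsPositive)
    (htc : IsTraceClass B)
    {G : Type*} [Group G] [TopologicalSpace G] [IsTopologicalGroup G]
    (U : G → E →L[𝕜] E) (hU1 : U 1 = 1) (hUmul : ∀ g h, U (g * h) = U g * U h)
    (hUunitary : ∀ g, U g ∈ unitary (E →L[𝕜] E))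
    (hUcont : ∀ x : E, Continuous fun g => U g x) :
    Continuous fun g => clmTrace (A * (U g * B * star (U g))) := by
  classical
  obtain ⟨C, hCsa, hCC⟩ := TraceAux.exists_sqrt hpos
  have habs : clmAbs B = B := by
    have hex : ∃ S : E →L[𝕜] E, S.IsPositive ∧ S * S = star B * B :=
      ⟨B, hpos, by rw [hsa.star_eq]⟩
    rw [clmAbs, dif_pos hex]
    exact TraceAux.sqrt_unique hex.choose_spec.1 hpos
      (by rw [hex.choose_spec.2, hsa.star_eq])
  obtain ⟨ι, N, hsum0⟩ := htc
  rw [habs] at hsum0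
  have hsum : Summable fun j => ‖C (N j)‖ ^ 2 := by
    refine hsum0.congr fun j => ?_
    have h1 : B (N j) = C (C (N j)) := by rw [← hCC, mul_apply_eq_comp]
    rw [h1, ← TraceAux.re_inner_symm hCsa (N j) (C (N j)), inner_self_eq_norm_sq]
  have key : ∀ g : G, clmTrace (A * (U g * B * star (U g)))
      = ∑' j, (inner 𝕜 (U g (C (N j))) (A (U g (C (N j)))) : 𝕜) := by
    intro g
    have hT : (U g * C) * star (U g * C) = U g * B * star (U g) := by
      rw [star_mul, hCsa.star_eq, ← hCC]
      noncomm_ring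
    have hsum2 : Summable fun j => ‖(U g * C) (N j)‖ ^ 2 := by
      refine hsum.congr fun j => ?_
      rw [mul_apply_eq_comp, TraceAux.unitary_norm_apply (hUunitary g)]
    have htr := TraceAux.traceAlong_eq (stdHilbertBasis 𝕜 E) N A (U g * C) hsum2
    rw [show A * (U g * B * star (U g)) = A * ((U g * C) * star (U g * C)) from by rw [hT]]
    rw [clmTrace, traceAlong, htr]
    refine tsum_congr fun j => ?_
    rw [mul_apply_eq_comp]
  have hfe : (fun g => clmTrace (A * (U g * B * star (U g))))
      = fun g => ∑' j, (inner 𝕜 (U g (C (N j))) (A (U g (C (N j)))) : 𝕜) := funext key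
  rw [hfe]
  refine continuous_tsum (fun j => ?_) (hsum.mul_left ‖A‖) (fun j g => ?_)
  · exact Continuous.inner (hUcont (C (N j))) (A.continuous.comp (hUcont (C (N j))))
  · have h1 : ‖(inner 𝕜 (U g (C (N j))) (A (U g (C (N j)))) : 𝕜)‖
        ≤ ‖U g (C (N j))‖ * ‖A (U g (C (N j)))‖ := norm_inner_le_norm _ _
    have h2 : ‖U g (C (N j))‖ = ‖C (N j)‖ := TraceAux.unitary_norm_apply (hUunitary g) _
    have h3 : ‖A (U g (C (N j)))‖ ≤ ‖A‖ * ‖C (N j)‖ := by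
      have := A.le_opNorm (U g (C (N j)))
      rwa [h2] at this
    calc ‖(inner 𝕜 (U g (C (N j))) (A (U g (C (N j)))) : 𝕜)‖
        ≤ ‖U g (C (N j))‖ * ‖A (U g (C (N j)))‖ := h1
      _ ≤ ‖C (N j)‖ * (‖A‖ * ‖C (N j)‖) := by
          rw [h2]
          exact mul_le_mul_of_nonneg_left h3 (norm_nonneg _)
      _ = ‖A‖ * ‖C (N j)‖ ^ 2 := by ring
end
end
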